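/- arXiv:2511.21481 — 9 statements merged into one kernel-verified Lean document; each statement's English description precedes it below -/
import Mathlib

section
/- Let X be a linear order and let σ, τ be elements of X^ω with τ ≤_{X^ω} σ. Writing σ = ⟨(b_0,a_0),…,(b_m,a_m)⟩ and writing m_τ + 1 for the number of pairs of τ, one has m_τ ≤ b_0; in particular the length of τ satisfies |τ| ≤ 2·b_0 + 2. (Consequently, if σ = (σ_i)_{i≥0} is an infinite <_{X^ω}-descending sequence and k_σ denotes the first natural-number exponent of σ_0, then |σ_i| ≤ 2·k_σ + 2 for every i ≥ 0.) -/
/-- `l` represents an element of `X^ω`: a finite sequence of pairs `(b_t, a_t)` with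
strictly decreasing natural-number exponents `b_0 > b_1 > … > b_m`. -/
def IsExpSeq {X : Type*} (l : List (ℕ × X)) : Prop :=
  l.Chain' (fun p q => q.1 < p.1)

/-- The `s`-th component of `τ`: at even positions `2t` the exponent `b_t` (in `ℕ`),
at odd positions `2t+1` the coefficient `a_t` (in `X`); `none` if undefined. -/
def comp {X : Type*} (l : List (ℕ × X)) (s : ℕ) : Option (ℕ ⊕ X) :=
  if s % 2 = 0 then (l[s / 2]?).map (fun p => Sum.inl p.1)
  else (l[s / 2]?).map (fun p => Sum.inr p.2)

/-- The order on `X^ω`: `τ <_{X^ω} σ` iff `τ` is a proper initial segment of `σ`, or at the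
least index `s` where both components are defined and differ, the component of `τ` is smaller
(comparing even positions in `ℕ` and odd positions in `X`). -/
def XOmegaLt {X : Type*} [LinearOrder X] (τ σ : List (ℕ × X)) : Prop :=
  (τ <+: σ ∧ τ ≠ σ) ∨
  ∃ s, (∀ r, r < s → comp τ r = comp σ r) ∧
    ∃ a b, comp τ s = some a ∧ comp σ s = some b ∧ Sum.Lex (· < ·) (· < ·) a b

lemma comp_zero {X : Type*} (l : List (ℕ × X)) :
    comp l 0 = (l[0]?).map (fun p => Sum.inl p.1) := by
  simp [comp]

lemma not_lt_nil {X : Type*} [LinearOrder X] (τ : List (ℕ × X)) :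
    ¬ XOmegaLt τ ([] : List (ℕ × X)) := by
  rintro (⟨h1, h2⟩ | ⟨s, _, a, b, _, hb, _⟩)
  · exact h2 (List.prefix_nil.mp h1)
  · simp [comp] at hb

lemma len_le {X : Type*} (l : List (ℕ × X)) (h : IsExpSeq l)
    (b : ℕ) (a : X) (hh : l[0]? = some (b, a)) : l.length ≤ b + 1 := by
  induction l generalizing b a with
  | nil => simp at hh
  | cons p rest ih =>
    simp at hh
    subst hh
    cases rest with
    | nil => simp
    | cons q r =>
      rw [IsExpSeq, List.Chain', List.isChain_cons_cons] at h
      have := ih h.2 q.1 q.2 (by simp)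
      have hq : q.1 < b := h.1
      simp only [List.length_cons] at *
      omega

lemma head_le {X : Type*} [LinearOrder X] (σ τ : List (ℕ × X))
    (hle : XOmegaLt τ σ ∨ τ = σ) (b0 : ℕ) (a0 : X) (hhead : σ[0]? = some (b0, a0)) :
    τ = [] ∨ ∃ b a, τ[0]? = some (b, a) ∧ b ≤ b0 := by
  rcases hle with (⟨⟨t, rfl⟩, _⟩ | ⟨s, hlt, a, b, ha, hb, hab⟩) | rfl
  · cases τ with
    | nil => left; rfl
    | cons p r =>
      right
      simp at hhead
      exact ⟨b0, a0, by simp [← hhead], le_refl _⟩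
  · right
    have hσ0 : comp σ 0 = some (Sum.inl b0) := by simp [comp_zero, hhead]
    cases hs : τ[0]? with
    | none =>
      have : τ = [] := by
        cases τ with
        | nil => rfl
        | cons p r => simp at hs
      subst this
      simp [comp] at ha
    | some p =>
      obtain ⟨pb, pa⟩ := p
      rcases s with _ | s
      · rw [comp_zero, hs] at ha
        rw [hσ0] at hb
        simp at ha hb
        subst ha; subst hb
        cases hab with
        | inl h => exact ⟨pb, pa, rfl, le_of_lt h⟩
      · have h0 := hlt 0 (Nat.succ_pos s)
        rw [comp_zero, comp_zero, hs, hhead] at h0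
        simp at h0
        exact ⟨pb, pa, rfl, le_of_eq h0⟩
  · exact Or.inr ⟨b0, a0, hhead, le_refl _⟩

/-- if `τ ≤_{X^ω} σ` and `σ = ⟨(b_0,a_0),…⟩`, then the number of pairs of `τ`
is at most `b_0 + 1` (i.e. `m_τ ≤ b_0`), hence `|τ| ≤ 2·b_0 + 2`; consequently every term of an
infinite `<_{X^ω}`-descending sequence has length at most `2·k_σ + 2`, where `k_σ` is the first
exponent of the first term. -/
theorem stmt_0 {X : Type*} [LinearOrder X] (σ τ : List (ℕ × X))
    (hσ : IsExpSeq σ) (hτ : IsExpSeq τ)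
    (hle : XOmegaLt τ σ ∨ τ = σ)
    (b0 : ℕ) (a0 : X) (hhead : σ[0]? = some (b0, a0)) :
    (τ.length ≤ b0 + 1 ∧ 2 * τ.length ≤ 2 * b0 + 2) ∧
    ∀ σs : ℕ → List (ℕ × X), (∀ i, IsExpSeq (σs i)) →
      (∀ i, XOmegaLt (σs (i + 1)) (σs i)) →
      ∀ kσ a, (σs 0)[0]? = some (kσ, a) → ∀ i, 2 * (σs i).length ≤ 2 * kσ + 2 := by
  have key : ∀ (σ' τ' : List (ℕ × X)), IsExpSeq τ' → (XOmegaLt τ' σ' ∨ τ' = σ') →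
      ∀ (b' : ℕ) (a' : X), σ'[0]? = some (b', a') → τ'.length ≤ b' + 1 := by
    intro σ' τ' hτ' hle' b' a' hh'
    rcases head_le σ' τ' hle' b' a' hh' with h | ⟨b, a, hb, hba⟩
    · simp [h]
    · exact le_trans (len_le τ' hτ' b a hb) (by omega)
  refine ⟨⟨key σ τ hτ hle b0 a0 hhead, by have := key σ τ hτ hle b0 a0 hhead; omega⟩, ?_⟩
  intro σs hseq hdesc kσ a hk i
  have claim : ∀ i, ∃ b a', (σs i)[0]? = some (b, a') ∧ b ≤ kσ := by
    intro i
    induction i with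
    | zero => exact ⟨kσ, a, hk, le_refl _⟩
    | succ n ih =>
      obtain ⟨b, a', hb, hle'⟩ := ih
      rcases head_le (σs n) (σs (n + 1)) (Or.inl (hdesc n)) b a' hb with h | ⟨b', a'', h, hb'⟩
      · exact absurd (h ▸ hdesc (n + 1)) (not_lt_nil _)
      · exact ⟨b', a'', h, le_trans hb' hle'⟩
  obtain ⟨b, a', hb, hle'⟩ := claim i
  have := len_le (σs i) (hseq i) b a' hb
  omega
end

section
/- Let X be a linear order and let σ = (σ_i)_{i≥0} be an infinite <_{X^ω}-descending sequence. For i < j define c(i,j) := |σ_j| if σ_j is a proper initial segment of σ_i, and otherwise c(i,j) := the least s such that σ_i(s) ≠ σ_j(s). Then for all natural numbers i < j < k one has c(i,k) ≤ c(i,j); that is, c is a right-ordered colouring of pairs of natural numbers with values in the finite set {0,…,2k_σ+1} (where k_σ is the first exponent of σ_0) equipped with the reverse of the natural order. -/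
-- The first-difference colouring `c(i,j)` associated to a sequence `σ`:
-- `c(i,j) = |σ_j|` if `σ_j` is a proper initial segment of `σ_i`, and otherwise
-- the least `s` with `σ_i(s) ≠ σ_j(s)`.
open Classical in
noncomputable def firstDiff {X : Type*} (σs : ℕ → List (ℕ × X)) (i j : ℕ) : ℕ :=
  if σs j <+: σs i ∧ σs j ≠ σs i then 2 * (σs j).length
  else sInf {s | comp (σs i) s ≠ comp (σs j) s}

/-! ### Auxiliary definitions and lemmas -/

/-- The strict "value" order on optional components: `none` is smaller than any defined
component, and defined components are compared by `Sum.Lex`. -/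
def OptLt {X : Type*} [LinearOrder X] (o₁ o₂ : Option (ℕ ⊕ X)) : Prop :=
  (o₁ = none ∧ o₂ ≠ none) ∨
  ∃ a b, o₁ = some a ∧ o₂ = some b ∧ Sum.Lex (· < ·) (· < ·) a b

theorem OptLt.ne {X : Type*} [LinearOrder X] {o₁ o₂ : Option (ℕ ⊕ X)} (h : OptLt o₁ o₂) :
    o₁ ≠ o₂ := by
  rcases h with ⟨h1, h2⟩ | ⟨a, b, h1, h2, h3⟩
  · rw [h1]; exact fun h => h2 h.symm
  · rw [h1, h2]; intro h
    injection h with h; subst h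
    exact irrefl_of (Sum.Lex (· < ·) (· < ·)) a h3

theorem OptLt.trans' {X : Type*} [LinearOrder X] {o₁ o₂ o₃ : Option (ℕ ⊕ X)}
    (h : OptLt o₁ o₂) (h' : OptLt o₂ o₃) : OptLt o₁ o₃ := by
  rcases h with ⟨h1, h2⟩ | ⟨a, b, h1, h2, h3⟩
  · rcases h' with ⟨g1, g2⟩ | ⟨a', b', g1, g2, g3⟩
    · exact absurd g1 h2
    · exact Or.inl ⟨h1, by simp [g2]⟩
  · rcases h' with ⟨g1, g2⟩ | ⟨a', b', g1, g2, g3⟩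
    · exact absurd h2 (by simp [g1])
    · refine Or.inr ⟨a, b', h1, g2, ?_⟩
      rw [g1] at h2; injection h2 with h2; subst h2
      exact trans_of (Sum.Lex (· < ·) (· < ·)) h3 g3

/-- `τ` is below `σ` with first difference exactly at position `s`. -/
def LtAt {X : Type*} [LinearOrder X] (τ σ : List (ℕ × X)) (s : ℕ) : Prop :=
  (∀ r, r < s → comp τ r = comp σ r) ∧ OptLt (comp τ s) (comp σ s)

theorem comp_eq_none_iff {X : Type*} {l : List (ℕ × X)} {s : ℕ} :
    comp l s = none ↔ l[s / 2]? = none := by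
  unfold comp; split <;> simp

theorem getElem?_lt_length {X : Type*} {l : List (ℕ × X)} {n : ℕ} (h : l[n]? ≠ none) :
    n < l.length := by
  by_contra hn
  exact h (List.getElem?_eq_none (le_of_not_gt hn))

theorem prefix_ltAt {X : Type*} [LinearOrder X] {τ σ : List (ℕ × X)}
    (hpre : τ <+: σ) (hne : τ ≠ σ) : LtAt τ σ (2 * τ.length) := by
  have hlen : τ.length < σ.length := by
    rcases lt_or_eq_of_le hpre.length_le with h | h
    · exact h
    · exact absurd (hpre.eq_of_length h) hne
  have hget : ∀ n, n < τ.length → τ[n]? = σ[n]? := by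
    intro n hn
    rw [List.getElem?_eq_getElem hn, List.getElem?_eq_getElem (hn.trans hlen)]
    exact congrArg some (hpre.getElem hn)
  constructor
  · intro r hr
    have : r / 2 < τ.length := Nat.div_lt_of_lt_mul (by omega)
    unfold comp; rw [hget _ this]
  · refine Or.inl ⟨?_, ?_⟩
    · rw [comp_eq_none_iff]
      have : 2 * τ.length / 2 = τ.length := by omega
      rw [this]
      exact List.getElem?_eq_none le_rfl
    · rw [Ne, comp_eq_none_iff]
      have h2 : 2 * τ.length / 2 = τ.length := by omega
      rw [h2, List.getElem?_eq_getElem hlen]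
      simp

theorem xOmegaLt_exists_ltAt {X : Type*} [LinearOrder X] {τ σ : List (ℕ × X)}
    (h : XOmegaLt τ σ) : ∃ s, LtAt τ σ s := by
  rcases h with ⟨hpre, hne⟩ | ⟨s, hagree, a, b, ha, hb, hlex⟩
  · exact ⟨2 * τ.length, prefix_ltAt hpre hne⟩
  · exact ⟨s, hagree, Or.inr ⟨a, b, ha, hb, hlex⟩⟩

theorem ltAt_trans {X : Type*} [LinearOrder X] {τ σ ρ : List (ℕ × X)} {s s' : ℕ}
    (h : LtAt τ σ s) (h' : LtAt σ ρ s') : LtAt τ ρ (min s s') := by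
  rcases lt_trichotomy s s' with hlt | heq | hgt
  · rw [min_eq_left hlt.le]
    refine ⟨fun r hr => (h.1 r hr).trans (h'.1 r (hr.trans hlt)), ?_⟩
    rw [← h'.1 s hlt]
    exact h.2
  · subst heq
    rw [min_self]
    exact ⟨fun r hr => (h.1 r hr).trans (h'.1 r hr), h.2.trans' h'.2⟩
  · rw [min_eq_right hgt.le]
    refine ⟨fun r hr => (h.1 r (hr.trans hgt)).trans (h'.1 r hr), ?_⟩
    rw [h.1 s' hgt]
    exact h'.2

theorem ltAt_sInf {X : Type*} [LinearOrder X] {τ σ : List (ℕ × X)} {s : ℕ}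
    (h : LtAt τ σ s) : sInf {r | comp σ r ≠ comp τ r} = s := by
  refine le_antisymm (Nat.sInf_le (fun he => h.2.ne he.symm)) ?_
  refine le_csInf ⟨s, fun he => h.2.ne he.symm⟩ ?_
  intro m hm
  by_contra hms
  exact hm (h.1 m (lt_of_not_ge hms)).symm

theorem firstDiff_eq {X : Type*} [LinearOrder X] {σs : ℕ → List (ℕ × X)} {i j s : ℕ}
    (h : LtAt (σs j) (σs i) s) : firstDiff σs i j = s := by
  unfold firstDiff
  split_ifs with hc
  · have h2 := prefix_ltAt hc.1 hc.2
    rw [← ltAt_sInf h, ltAt_sInf h2]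
  · exact ltAt_sInf h

theorem desc_ltAt {X : Type*} [LinearOrder X] {σs : ℕ → List (ℕ × X)}
    (hdesc : ∀ i, XOmegaLt (σs (i + 1)) (σs i)) :
    ∀ i j, i < j → ∃ s, LtAt (σs j) (σs i) s := by
  intro i j hij
  induction j, hij using Nat.le_induction with
  | base => exact xOmegaLt_exists_ltAt (hdesc i)
  | succ j hij ih =>
    obtain ⟨s, hs⟩ := ih
    obtain ⟨s', hs'⟩ := xOmegaLt_exists_ltAt (hdesc j)
    exact ⟨min s' s, ltAt_trans hs' hs⟩

theorem exp_bound {X : Type*} {l : List (ℕ × X)} (h : IsExpSeq l) :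
    ∀ t, (ht : t < l.length) → l[t].1 + t ≤ (l[0]'(by omega)).1 := by
  intro t
  induction t with
  | zero => intro ht; simp
  | succ t ih =>
    intro ht
    have h1 : l[t + 1].1 < (l[t]'(by omega)).1 := by
      have := List.isChain_iff_getElem.mp h t (by omega)
      simpa using this
    have := ih (by omega)
    omega

theorem comp_zero_eq_some {X : Type*} {l : List (ℕ × X)} {b : ℕ ⊕ X}
    (h : comp l 0 = some b) : ∃ q, l[0]? = some q ∧ b = Sum.inl q.1 := by
  unfold comp at h
  rw [if_pos (by norm_num), Option.map_eq_some_iff] at h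
  obtain ⟨q, hq, hb⟩ := h
  exact ⟨q, by simpa using hq, hb.symm⟩

/-- for an infinite `<_{X^ω}`-descending sequence `σ`, the first-difference
colouring satisfies `c(i,k) ≤ c(i,j)` for all `i < j < k`; i.e. `c` is a right-ordered
colouring with values in `{0, …, 2·k_σ + 1}` (where `k_σ` is the first exponent of `σ_0`)
equipped with the reverse of the natural order. -/
theorem stmt_2 {X : Type*} [LinearOrder X] (σs : ℕ → List (ℕ × X))
    (hvalid : ∀ i, IsExpSeq (σs i))
    (hdesc : ∀ i, XOmegaLt (σs (i + 1)) (σs i)) :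
    (∀ i j k, i < j → j < k → firstDiff σs i k ≤ firstDiff σs i j) ∧
    ∀ kσ a, (σs 0)[0]? = some (kσ, a) →
      ∀ i j, i < j → firstDiff σs i j < 2 * kσ + 2 := by
  constructor
  · intro i j k hij hjk
    obtain ⟨s1, hs1⟩ := desc_ltAt hdesc i j hij
    obtain ⟨s2, hs2⟩ := desc_ltAt hdesc j k hjk
    rw [firstDiff_eq hs1, firstDiff_eq (ltAt_trans hs2 hs1)]
    exact min_le_right _ _
  · intro kσ a h0 i j hij
    -- first exponent of every σs i is at most kσ
    have hhead : ∀ i p, (σs i)[0]? = some p → p.1 ≤ kσ := by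
      intro i
      induction i with
      | zero => intro p hp; rw [h0] at hp; injection hp with hp; rw [← hp]
      | succ i ih =>
        intro p hp
        obtain ⟨s0, hs0⟩ := xOmegaLt_exists_ltAt (hdesc i)
        have hcomp : comp (σs (i + 1)) 0 = some (Sum.inl p.1) := by
          unfold comp; simp [hp]
        -- produce q with (σs i)[0]? = some q and p.1 ≤ q.1
        have : ∃ q, (σs i)[0]? = some q ∧ p.1 ≤ q.1 := by
          rcases Nat.eq_zero_or_pos s0 with rfl | hpos
          · rcases hs0.2 with ⟨h1, _⟩ | ⟨a', b', ha', hb', hlex⟩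
            · rw [hcomp] at h1; exact absurd h1 (by simp)
            · rw [hcomp] at ha'; injection ha' with ha'
              obtain ⟨q, hq, hb⟩ := comp_zero_eq_some hb'
              refine ⟨q, hq, ?_⟩
              rw [← ha', hb] at hlex
              exact le_of_lt (by simpa using hlex)
          · obtain ⟨q, hq, hb⟩ := comp_zero_eq_some ((hs0.1 0 hpos).symm.trans hcomp)
            refine ⟨q, hq, ?_⟩
            rw [Sum.inl.injEq] at hb
            omega
        obtain ⟨q, hq, hpq⟩ := this
        exact hpq.trans (ih q hq)
    obtain ⟨s, hs⟩ := desc_ltAt hdesc i j hij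
    rw [firstDiff_eq hs]
    -- comp (σs i) s is defined
    have hdefc : comp (σs i) s ≠ none := by
      rcases hs.2 with ⟨_, h2⟩ | ⟨a', b', _, hb', _⟩
      · exact h2
      · rw [hb']; simp
    have hdef : (σs i)[s / 2]? ≠ none := fun hn => hdefc (comp_eq_none_iff.mpr hn)
    have hlt : s / 2 < (σs i).length := getElem?_lt_length hdef
    have hexp := exp_bound (hvalid i) (s / 2) hlt
    have h0i : ((σs i)[0]'(by omega)).1 ≤ kσ :=
      hhead i _ (List.getElem?_eq_getElem (by omega))
    have hdm := Nat.div_add_mod s 2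
    have hmod : s % 2 < 2 := Nat.mod_lt s (by norm_num)
    omega
end

section
/- For every linear order X and every infinite <_{X^ω}-descending sequence σ = (σ_i)_{i≥0}, there exist a natural number t and a strictly increasing function h : ℕ → ℕ such that every σ_{h(i)} has at least t+1 pairs and the sequence i ↦ a_t^{h(i)} of t-th X-coefficients of the σ_{h(i)} is strictly <_X-decreasing. In particular, every infinite descending sequence in X^ω contains an infinite descending sequence in X. -/
section StmtFourProof

variable {X : Type*} [LinearOrder X]

private lemma comp_even' (l : List (ℕ × X)) (t : ℕ) :
    comp l (2*t) = (l[t]?).map (fun p => Sum.inl p.1) := by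
  have h1 : (2*t) % 2 = 0 := by omega
  have h2 : (2*t) / 2 = t := by omega
  simp [comp, h1, h2]

private lemma comp_odd' (l : List (ℕ × X)) (t : ℕ) :
    comp l (2*t+1) = (l[t]?).map (fun p => Sum.inr p.2) := by
  have h1 : (2*t+1) % 2 = 1 := by omega
  have h2 : (2*t+1) / 2 = t := by omega
  simp [comp, h1, h2]

private lemma comp_lt_length' {l : List (ℕ × X)} {s : ℕ} {v : ℕ ⊕ X}
    (h : comp l s = some v) : s / 2 < l.length := by
  unfold comp at h
  split at h <;>
  · rcases Option.map_eq_some_iff.mp h with ⟨p, hp, _⟩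
    exact (List.getElem?_eq_some_iff.mp hp).1

private lemma lex_ne' {a b : ℕ ⊕ X} (h : Sum.Lex (· < ·) (· < ·) a b) : a ≠ b := by
  rintro rfl
  cases h with
  | inl h => exact lt_irrefl _ h
  | inr h => exact lt_irrefl _ h

/-- Stage invariant: from `N` on, lengths are at least `t` and consecutive terms agree
on all components at positions `< 2t`. -/
private def AStage (σs : ℕ → List (ℕ × X)) (t N : ℕ) : Prop :=
  ∀ i, N ≤ i → t ≤ (σs i).length ∧ ∀ r, r < 2*t → comp (σs (i+1)) r = comp (σs i) r

private lemma lenA {σs : ℕ → List (ℕ × X)} (hdesc : ∀ i, XOmegaLt (σs (i + 1)) (σs i))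
    {t N : ℕ} (hA : AStage σs t N) : ∀ i, N ≤ i → t + 1 ≤ (σs i).length := by
  intro i hi
  by_contra hle
  have hlen : (σs i).length = t := le_antisymm (by omega) ((hA i hi).1)
  rcases hdesc i with ⟨hpre, hne⟩ | ⟨s, _, a, b, ha, hb, hlex⟩
  · have h1 := hpre.length_le
    have h2 : (σs (i+1)).length ≠ (σs i).length := fun he => hne (hpre.eq_of_length he)
    have h3 := (hA (i+1) (by omega)).1
    omega
  · have hs : s / 2 < t := hlen ▸ comp_lt_length' hb
    have hag := (hA i hi).2 s (by omega)
    rw [ha, hb] at hag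
    exact lex_ne' hlex (Option.some_inj.mp hag)

private lemma stepA {σs : ℕ → List (ℕ × X)} (hdesc : ∀ i, XOmegaLt (σs (i + 1)) (σs i))
    {t N : ℕ} (hA : AStage σs t N) :
    (∃ h : ℕ → ℕ, StrictMono h ∧ (∀ i, t + 1 ≤ (σs (h i)).length) ∧
      ∀ i j, i < j → ∀ p q : ℕ × X,
        (σs (h i))[t]? = some p → (σs (h j))[t]? = some q → q.2 < p.2) ∨
    ∃ N', AStage σs (t+1) N' := by
  have hlen := lenA hdesc hA
  have hidx : ∀ i, ∃ p : ℕ × X, (σs (N+i))[t]? = some p := by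
    intro i
    exact ⟨(σs (N+i))[t]'(by have := hlen (N+i) (Nat.le_add_right _ _); omega),
      List.getElem?_eq_getElem _⟩
  choose p hp using hidx
  -- trichotomy for consecutive terms
  have htri : ∀ i, p (i+1) = p i ∨ (p (i+1)).1 < (p i).1 ∨
      ((p (i+1)).1 = (p i).1 ∧ (p (i+1)).2 < (p i).2) := by
    intro i
    have hNi : N ≤ N + i := Nat.le_add_right _ _
    have hEq : N + i + 1 = N + (i+1) := rfl
    rcases hdesc (N+i) with ⟨⟨u, hu⟩, _⟩ | ⟨s, hagr, a, b, ha, hb, hlex⟩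
    · left
      have hp1 : (σs (N+i+1))[t]? = some (p (i+1)) := hp (i+1)
      have hlt : t < (σs (N+i+1)).length := (List.getElem?_eq_some_iff.mp hp1).1
      have : (σs (N+i))[t]? = some (p (i+1)) := by
        rw [← hu, List.getElem?_append_left hlt]
        exact hp1
      exact Option.some_inj.mp (this.symm.trans (hp i))
    · rw [hEq] at ha hagr
      have hs2t : 2*t ≤ s := by
        by_contra hlt
        have hag := (hA (N+i) hNi).2 s (by omega)
        rw [hEq, ha, hb] at hag
        exact lex_ne' hlex (Option.some_inj.mp hag)
      rcases (by omega : s = 2*t ∨ s = 2*t+1 ∨ 2*t+2 ≤ s) with hseq | hseq | hsge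
      · subst hseq
        rw [comp_even', hp (i+1)] at ha
        rw [comp_even', hp i] at hb
        have ha' : Sum.inl (p (i+1)).1 = a := Option.some_inj.mp ha
        have hb' : Sum.inl (p i).1 = b := Option.some_inj.mp hb
        rw [← ha', ← hb'] at hlex
        right; left
        exact (Sum.lex_inl_inl).mp hlex
      · subst hseq
        have hag0 := hagr (2*t) (by omega)
        rw [comp_even', comp_even', hp (i+1), hp i] at hag0
        have hfst : (p (i+1)).1 = (p i).1 := by
          have := Option.some_inj.mp hag0
          exact Sum.inl_injective this
        rw [comp_odd', hp (i+1)] at ha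
        rw [comp_odd', hp i] at hb
        have ha' : Sum.inr (p (i+1)).2 = a := Option.some_inj.mp ha
        have hb' : Sum.inr (p i).2 = b := Option.some_inj.mp hb
        rw [← ha', ← hb'] at hlex
        right; right
        exact ⟨hfst, (Sum.lex_inr_inr).mp hlex⟩
      · left
        have hag0 := hagr (2*t) (by omega)
        have hag1 := hagr (2*t+1) (by omega)
        rw [comp_even', comp_even', hp (i+1), hp i] at hag0
        rw [comp_odd', comp_odd', hp (i+1), hp i] at hag1
        have h1 : (p (i+1)).1 = (p i).1 := Sum.inl_injective (Option.some_inj.mp hag0)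
        have h2 : (p (i+1)).2 = (p i).2 := Sum.inr_injective (Option.some_inj.mp hag1)
        exact Prod.ext h1 h2
  have hbstep : ∀ i, (p (i+1)).1 ≤ (p i).1 := by
    intro i
    rcases htri i with h | h | h
    · rw [h]
    · exact le_of_lt h
    · exact le_of_eq h.1
  have hbanti : ∀ j i, i ≤ j → (p j).1 ≤ (p i).1 := by
    intro j
    induction j with
    | zero =>
        intro i hij
        have : i = 0 := by omega
        rw [this]
    | succ j ih =>
        intro i hij
        rcases Nat.lt_or_ge i (j+1) with h | h
        · exact le_trans (hbstep j) (ih i (by omega))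
        · have : i = j + 1 := by omega
          rw [this]
  -- the exponent sequence is eventually constant
  obtain ⟨M, hM⟩ : ∃ M, ∀ i, M ≤ i → (p i).1 = (p M).1 := by
    have hne : (Set.range fun i => (p i).1).Nonempty := ⟨(p 0).1, ⟨0, rfl⟩⟩
    obtain ⟨M, hMeq⟩ := Nat.sInf_mem hne
    refine ⟨M, fun i hi => ?_⟩
    have h1 : (p i).1 ≤ (p M).1 := hbanti i M hi
    have h2 : sInf (Set.range fun i => (p i).1) ≤ (p i).1 := Nat.sInf_le ⟨i, rfl⟩
    have h3 : (p M).1 = sInf (Set.range fun i => (p i).1) := hMeq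
    omega
  have hastep : ∀ i, M ≤ i → (p (i+1)).2 ≤ (p i).2 := by
    intro i hi
    rcases htri i with h | h | h
    · rw [h]
    · exfalso
      have := hM i hi
      have := hM (i+1) (by omega)
      omega
    · exact le_of_lt h.2
  have haanti : ∀ j i, M ≤ i → i ≤ j → (p j).2 ≤ (p i).2 := by
    intro j
    induction j with
    | zero =>
        intro i _ hij
        have : i = 0 := by omega
        rw [this]
    | succ j ih =>
        intro i hMi hij
        rcases Nat.lt_or_ge i (j+1) with h | h
        · exact le_trans (hastep j (by omega)) (ih i hMi (by omega))
        · have : i = j + 1 := by omega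
          rw [this]
  by_cases hinf : ∀ K, ∃ i, K ≤ i ∧ M ≤ i ∧ (p (i+1)).2 < (p i).2
  · left
    choose f hf1 hf2 hf3 using hinf
    set g : ℕ → ℕ := fun n => Nat.rec (f M) (fun _ prev => f (prev + 1)) n with hg
    have hg0 : g 0 = f M := rfl
    have hgs : ∀ n, g (n+1) = f (g n + 1) := fun n => rfl
    have hgmono : StrictMono g := by
      apply strictMono_nat_of_lt_succ
      intro n
      rw [hgs n]
      have := hf1 (g n + 1)
      omega
    have hgM : ∀ n, M ≤ g n := by
      intro n
      cases n with
      | zero => exact hf1 M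
      | succ n => rw [hgs n]; exact hf2 _
    have hgdrop : ∀ n, (p (g n + 1)).2 < (p (g n)).2 := by
      intro n
      cases n with
      | zero => exact hf3 M
      | succ n => rw [hgs n]; exact hf3 _
    refine ⟨fun n => N + g n, ?_, ?_, ?_⟩
    · intro a b hab
      exact Nat.add_lt_add_left (hgmono hab) N
    · intro i
      exact hlen _ (Nat.le_add_right _ _)
    · intro i j hij q r hq hr
      have hq' : q = p (g i) := (Option.some_inj.mp ((hp (g i)).symm.trans hq)).symm
      have hr' : r = p (g j) := (Option.some_inj.mp ((hp (g j)).symm.trans hr)).symm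
      subst hq'; subst hr'
      have h1 : g i + 1 ≤ g j := hgmono hij
      calc (p (g j)).2 ≤ (p (g i + 1)).2 := haanti _ _ (by have := hgM i; omega) h1
        _ < (p (g i)).2 := hgdrop i
  · right
    push_neg at hinf
    obtain ⟨K, hK⟩ := hinf
    have haconst : ∀ i, max K M ≤ i → (p (i+1)).2 = (p i).2 := by
      intro i hi
      have h1 := hastep i (le_trans (le_max_right _ _) hi)
      have h2 := hK i (le_trans (le_max_left _ _) hi) (le_trans (le_max_right _ _) hi)
      exact le_antisymm h1 h2
    refine ⟨N + max K M, ?_⟩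
    intro i hi
    obtain ⟨j, rfl⟩ : ∃ j, i = N + j := ⟨i - N, by omega⟩
    have hj : max K M ≤ j := by omega
    constructor
    · exact hlen _ (Nat.le_add_right _ _)
    · intro r hr
      have hEq : N + j + 1 = N + (j+1) := rfl
      rcases (by omega : r < 2*t ∨ r = 2*t ∨ r = 2*t+1) with hrl | hrl | hrl
      · exact (hA (N+j) (Nat.le_add_right _ _)).2 r hrl
      · subst hrl
        rw [hEq, comp_even', comp_even', hp (j+1), hp j]
        have hfst : (p (j+1)).1 = (p j).1 := by
          rw [hM (j+1) (by have := le_max_right K M; omega),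
            hM j (by have := le_max_right K M; omega)]
        simp only [Option.map_some, hfst]
      · subst hrl
        rw [hEq, comp_odd', comp_odd', hp (j+1), hp j]
        simp only [Option.map_some, haconst j hj]

private lemma expSeq_head_ge {l : List (ℕ × X)} (h : IsExpSeq l) :
    ∀ k, (hk : k < l.length) → (l[k]'hk).1 + k ≤ (l[0]'(by omega)).1 := by
  haveI : IsTrans (ℕ × X) (fun p q => q.1 < p.1) := ⟨fun _ _ _ hab hbc => lt_trans hbc hab⟩
  have hpw : l.Pairwise (fun p q => q.1 < p.1) := List.isChain_iff_pairwise.mp h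
  intro k
  induction k with
  | zero => intro hk; omega
  | succ k ih =>
      intro hk
      have h1 := ih (by omega)
      have h2 : (l[k+1]'hk).1 < (l[k]'(by omega)).1 :=
        List.pairwise_iff_getElem.mp hpw k (k+1) (by omega) hk (by omega)
      omega

end StmtFourProof

/-- every infinite `<_{X^ω}`-descending sequence contains an infinite
`<_X`-descending sequence: there are `t : ℕ` and a strictly increasing `h : ℕ → ℕ` such that
every `σ_{h(i)}` has at least `t+1` pairs and the `t`-th `X`-coefficients of the `σ_{h(i)}`
form a strictly `<_X`-decreasing sequence. -/
theorem stmt_4 {X : Type*} [LinearOrder X] (σs : ℕ → List (ℕ × X))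
    (hvalid : ∀ i, IsExpSeq (σs i))
    (hdesc : ∀ i, XOmegaLt (σs (i + 1)) (σs i)) :
    ∃ (t : ℕ) (h : ℕ → ℕ), StrictMono h ∧
      (∀ i, t + 1 ≤ (σs (h i)).length) ∧
      ∀ i j, i < j → ∀ p q : ℕ × X,
        (σs (h i))[t]? = some p → (σs (h j))[t]? = some q → q.2 < p.2 := by

  by_contra h0
  have hAll : ∀ t, ∃ N, AStage σs t N := by
    intro t
    induction t with
    | zero => exact ⟨0, fun i _ => ⟨Nat.zero_le _, fun r hr => absurd hr (by omega)⟩⟩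
    | succ t ih =>
        obtain ⟨N, hA⟩ := ih
        rcases stepA hdesc hA with ⟨h, h1, h2, h3⟩ | h
        · exact absurd ⟨t, h, h1, h2, h3⟩ h0
        · exact h
  obtain ⟨N1, hA1⟩ := hAll 1
  have hcomp0 : ∀ i, N1 ≤ i → comp (σs i) 0 = comp (σs N1) 0 := by
    intro i
    induction i with
    | zero =>
        intro hi
        have : N1 = 0 := by omega
        rw [this]
    | succ i ih =>
        intro hi
        rcases Nat.lt_or_ge N1 (i+1) with h | h
        · rw [(hA1 i (by omega)).2 0 (by omega)]
          exact ih (by omega)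
        · have : N1 = i + 1 := by omega
          rw [this]
  have hlen1 : 0 < (σs N1).length := (hA1 N1 le_rfl).1
  obtain ⟨N2, hA2⟩ := hAll ((σs N1)[0].1 + 2)
  set B := (σs N1)[0].1 with hB
  set i := max N1 N2 with hi
  have hleni : B + 2 ≤ (σs i).length := (hA2 i (le_max_right _ _)).1
  have hexp : ((σs i)[B+1]'(by omega)).1 + (B+1) ≤ ((σs i)[0]'(by omega)).1 :=
    expSeq_head_ge (hvalid i) (B+1) (by omega)
  have hc : comp (σs i) 0 = comp (σs N1) 0 := hcomp0 i (le_max_left _ _)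
  have h20 : (2 : ℕ) * 0 = 0 := rfl
  rw [← h20, comp_even', comp_even',
    List.getElem?_eq_getElem (by omega : 0 < (σs i).length),
    List.getElem?_eq_getElem hlen1] at hc
  have : ((σs i)[0]'(by omega)).1 = B := Sum.inl_injective (Option.some_inj.mp hc)
  omega
end

section
/- Let X be a linear order whose strict order relation <_X is well-founded. Then the strict order <_{X^ω} on X^ω is well-founded; i.e., if X is well-ordered then X^ω is well-ordered. -/
set_option linter.unusedSectionVars false

section Aux
variable {X : Type*} [LinearOrder X] [WellFoundedLT X]

noncomputable def OmegaB (X : Type*) [LinearOrder X] [WellFoundedLT X] : Ordinal :=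
  Ordinal.type ((·<·) : X → X → Prop) + 2

noncomputable def gOrd (a : X) : Ordinal := Ordinal.typein ((·<·) : X → X → Prop) a

lemma mul_succ_eq (x y : Ordinal) : x * (y + 1) = x * y + x := by
  rw [mul_add, mul_one]

lemma one_lt_OmegaB : 1 < OmegaB X := by
  have : (1:Ordinal) < 2 := by norm_num
  calc (1:Ordinal) < 2 := this
    _ ≤ OmegaB X := le_add_self

lemma zero_lt_OmegaB : (0:Ordinal) < OmegaB X := lt_trans zero_lt_one one_lt_OmegaB

lemma gOrd_add_two_le (a : X) : gOrd a + 2 ≤ OmegaB X := by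
  have h : gOrd a ≤ Ordinal.type ((·<·) : X → X → Prop) :=
    (Ordinal.typein_lt_type _ a).le
  exact add_le_add_left h 2

lemma gOrd_lt_gOrd {a b : X} (h : a < b) : gOrd a < gOrd b := by
  rw [gOrd, gOrd, Ordinal.typein_lt_typein]; exact h

noncomputable def fval : List (ℕ × X) → Ordinal
  | [] => 0
  | p :: l => OmegaB X ^ (p.1 : Ordinal) * (gOrd p.2 + 1) + fval l

lemma fval_append (l1 l2 : List (ℕ × X)) : fval (l1 ++ l2) = fval l1 + fval l2 := by
  induction l1 with
  | nil => simp [fval]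
  | cons p l ih => simp [fval, ih, add_assoc]

lemma fval_pos {l : List (ℕ × X)} (h : l ≠ []) : 0 < fval l := by
  cases l with
  | nil => exact absurd rfl h
  | cons p l =>
    have h1 : (0:Ordinal) < OmegaB X ^ (p.1 : Ordinal) * (gOrd p.2 + 1) :=
      mul_pos (Ordinal.opow_pos _ zero_lt_OmegaB)
        (lt_of_lt_of_le zero_lt_one (le_add_self))
    exact lt_of_lt_of_le h1 (le_self_add)

lemma lt_of_expSeq : ∀ (l : List (ℕ × X)) (b : ℕ) (a : X), IsExpSeq ((b, a) :: l) →
    ∀ p ∈ l, p.1 < b := by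
  intro l
  induction l with
  | nil => intro b a _ p hp; simp at hp
  | cons q l ih =>
    intro b a h p hp
    have h1 : q.1 < b := (List.isChain_cons_cons.mp h).1
    rcases List.mem_cons.mp hp with h' | h'
    · rw [h']; exact h1
    · have h2 : IsExpSeq ((q.1, q.2) :: l) := by
        have := (List.isChain_cons_cons.mp h).2
        exact this
      exact lt_trans (ih q.1 q.2 h2 p h') h1

lemma isExpSeq_tail {p : ℕ × X} {l : List (ℕ × X)} (h : IsExpSeq (p :: l)) : IsExpSeq l :=
  h.tail

/-- bound: if all exponents of `l` are `< b`, then `fval l < Ω ^ b`. -/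
lemma fval_lt_opow : ∀ (l : List (ℕ × X)), IsExpSeq l → ∀ b : ℕ, (∀ p ∈ l, p.1 < b) →
    fval l < OmegaB X ^ (b : Ordinal) := by
  intro l
  induction l with
  | nil => intro _ b _; exact Ordinal.opow_pos _ zero_lt_OmegaB
  | cons p l ih =>
    intro h b hb
    have hp : p.1 < b := hb p (by simp)
    have htail : fval l < OmegaB X ^ (p.1 : Ordinal) := by
      apply ih h.tail
      intro q hq
      exact lt_of_expSeq l p.1 p.2 (by simpa using h) q hq
    calc fval (p :: l) = OmegaB X ^ (p.1 : Ordinal) * (gOrd p.2 + 1) + fval l := rfl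
      _ < OmegaB X ^ (p.1 : Ordinal) * (gOrd p.2 + 1) + OmegaB X ^ (p.1 : Ordinal) :=
          add_lt_add_right htail _
      _ = OmegaB X ^ (p.1 : Ordinal) * (gOrd p.2 + 1 + 1) :=
          (mul_succ_eq _ (gOrd p.2 + 1)).symm
      _ ≤ OmegaB X ^ (p.1 : Ordinal) * OmegaB X := by
          apply mul_le_mul_right
          have := gOrd_add_two_le p.2
          calc gOrd p.2 + 1 + 1 = gOrd p.2 + 2 := by rw [add_assoc]; norm_num
            _ ≤ OmegaB X := this
      _ = OmegaB X ^ ((p.1 : Ordinal) + 1) := by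
          rw [Ordinal.add_one_eq_succ, Ordinal.opow_succ]
      _ ≤ OmegaB X ^ (b : Ordinal) := by
          apply Ordinal.opow_le_opow_right zero_lt_OmegaB
          have h5 := Nat.succ_le_of_lt hp
          exact_mod_cast h5

/-- step bound : head comparison -/
lemma fval_lt_fval_head {b b' : ℕ} {a a' : X} {τ' σ' : List (ℕ × X)}
    (hτ : IsExpSeq ((b, a) :: τ'))
    (hlex : b < b' ∨ (b = b' ∧ a < a')) :
    fval ((b, a) :: τ') < fval ((b', a') :: σ') := by
  have htail : fval τ' < OmegaB X ^ (b : Ordinal) :=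
    fval_lt_opow τ' hτ.tail b (lt_of_expSeq τ' b a hτ)
  have h1 : fval ((b, a) :: τ') < OmegaB X ^ (b : Ordinal) * (gOrd a + 2) := by
    calc fval ((b, a) :: τ') = OmegaB X ^ (b : Ordinal) * (gOrd a + 1) + fval τ' := rfl
      _ < OmegaB X ^ (b : Ordinal) * (gOrd a + 1) + OmegaB X ^ (b : Ordinal) :=
          add_lt_add_right htail _
      _ = OmegaB X ^ (b : Ordinal) * (gOrd a + 1 + 1) :=
          (mul_succ_eq _ (gOrd a + 1)).symm
      _ = OmegaB X ^ (b : Ordinal) * (gOrd a + 2) := by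
          rw [add_assoc]; norm_num
  have h2 : OmegaB X ^ (b' : Ordinal) * (gOrd a' + 1) ≤ fval ((b', a') :: σ') :=
    le_self_add
  rcases hlex with hbb | ⟨rfl, haa⟩
  · have : fval ((b, a) :: τ') < OmegaB X ^ (b' : Ordinal) := by
      apply lt_of_lt_of_le h1
      calc OmegaB X ^ (b : Ordinal) * (gOrd a + 2) ≤ OmegaB X ^ (b : Ordinal) * OmegaB X :=
            mul_le_mul_right (gOrd_add_two_le a) _
        _ = OmegaB X ^ ((b : Ordinal) + 1) := by rw [Ordinal.add_one_eq_succ, Ordinal.opow_succ]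
        _ ≤ OmegaB X ^ (b' : Ordinal) := by
            apply Ordinal.opow_le_opow_right zero_lt_OmegaB
            have h5 := Nat.succ_le_of_lt hbb
            exact_mod_cast h5
    apply lt_of_lt_of_le this
    apply le_trans _ h2
    calc OmegaB X ^ (b' : Ordinal) = OmegaB X ^ (b' : Ordinal) * 1 := (mul_one _).symm
      _ ≤ OmegaB X ^ (b' : Ordinal) * (gOrd a' + 1) := by
          apply mul_le_mul_right
          exact le_add_self
  · apply lt_of_lt_of_le h1
    apply le_trans _ h2
    apply mul_le_mul_right
    have : gOrd a + 1 ≤ gOrd a' := Order.add_one_le_of_lt (gOrd_lt_gOrd haa)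
    calc gOrd a + 2 = gOrd a + 1 + 1 := by rw [add_assoc]; norm_num
      _ ≤ gOrd a' + 1 := add_le_add_left this 1

/-- main monotonicity by induction on position of first differing pair -/
lemma fval_mono : ∀ (t : ℕ) (τ σ : List (ℕ × X)), IsExpSeq τ → IsExpSeq σ →
    (∀ u, u < t → τ[u]? = σ[u]?) →
    ∀ b a b' a', τ[t]? = some (b, a) → σ[t]? = some (b', a') →
    (b < b' ∨ (b = b' ∧ a < a')) → fval τ < fval σ := by
  intro t
  induction t with
  | zero =>
    intro τ σ hτ hσ _ b a b' a' hτ0 hσ0 hlex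
    cases τ with
    | nil => simp at hτ0
    | cons p τ' =>
      cases σ with
      | nil => simp at hσ0
      | cons q σ' =>
        simp at hτ0 hσ0
        subst hτ0; subst hσ0
        exact fval_lt_fval_head hτ hlex
  | succ t ih =>
    intro τ σ hτ hσ heq b a b' a' hτt hσt hlex
    cases τ with
    | nil => simp at hτt
    | cons p τ' =>
      cases σ with
      | nil => simp at hσt
      | cons q σ' =>
        have h0 : p = q := by
          have := heq 0 (Nat.zero_lt_succ t); simpa using this
        subst h0
        have : fval τ' < fval σ' := by
          apply ih τ' σ' hτ.tail hσ.tail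
          · intro u hu
            have := heq (u + 1) (Nat.succ_lt_succ hu)
            simpa using this
          · simpa using hτt
          · simpa using hσt
          · exact hlex
        exact add_lt_add_right this _

lemma getElem?_eq_of_comp {τ σ : List (ℕ × X)} {u : ℕ}
    (h1 : comp τ (2 * u) = comp σ (2 * u)) (h2 : comp τ (2 * u + 1) = comp σ (2 * u + 1)) :
    τ[u]? = σ[u]? := by
  have e1 : (2 * u) % 2 = 0 := by omega
  have e2 : ¬ ((2 * u + 1) % 2 = 0) := by omega
  have e3 : (2 * u) / 2 = u := by omega
  have e4 : (2 * u + 1) / 2 = u := by omega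
  rw [comp, comp, if_pos e1, if_pos e1, e3] at h1
  rw [comp, comp, if_neg e2, if_neg e2, e4] at h2
  cases hτu : τ[u]? with
  | none => cases hσu : σ[u]? with
    | none => rfl
    | some q => rw [hτu, hσu] at h1; simp at h1
  | some p => cases hσu : σ[u]? with
    | none => rw [hτu, hσu] at h1; simp at h1
    | some q =>
      rw [hτu, hσu] at h1 h2
      simp at h1 h2
      cases p; cases q; simp_all

lemma fval_strictMono {τ σ : List (ℕ × X)} (hτ : IsExpSeq τ) (hσ : IsExpSeq σ)
    (h : XOmegaLt τ σ) : fval τ < fval σ := by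
  rcases h with ⟨⟨t, rfl⟩, hne⟩ | ⟨s, heq, a0, b0, ha0, hb0, hlex⟩
  · have ht : t ≠ [] := by intro h; apply hne; simp [h]
    rw [fval_append]
    have := add_lt_add_right (fval_pos ht) (fval τ)
    simpa using this
  · -- first difference at position s
    have hpair : ∀ u, 2 * u + 1 < s → τ[u]? = σ[u]? := fun u hu =>
      getElem?_eq_of_comp (heq (2 * u) (by omega)) (heq (2 * u + 1) hu)
    set t := s / 2 with hts
    rcases Nat.even_or_odd s with ⟨k, hk⟩ | ⟨k, hk⟩
    · -- s even = 2k, first diff is in exponents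
      have hkt : k = t := by omega
      have es : s % 2 = 0 := by omega
      have ed : s / 2 = t := hts.symm
      rw [comp, if_pos es, ed] at ha0 hb0
      rcases Option.map_eq_some_iff.mp ha0 with ⟨p, hp, hpa⟩
      rcases Option.map_eq_some_iff.mp hb0 with ⟨q, hq, hqb⟩
      subst hpa; subst hqb
      have hlt : p.1 < q.1 := by cases hlex; assumption
      exact fval_mono t τ σ hτ hσ
        (fun u hu => hpair u (by omega)) p.1 p.2 q.1 q.2
        (by rw [hp]) (by rw [hq]) (Or.inl hlt)
    · -- s odd = 2k+1, first diff is in coefficients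
      have hkt : k = t := by omega
      have es : ¬ (s % 2 = 0) := by omega
      have ed : s / 2 = t := hts.symm
      rw [comp, if_neg es, ed] at ha0 hb0
      rcases Option.map_eq_some_iff.mp ha0 with ⟨p, hp, hpa⟩
      rcases Option.map_eq_some_iff.mp hb0 with ⟨q, hq, hqb⟩
      subst hpa; subst hqb
      have hlt : p.2 < q.2 := by cases hlex; assumption
      -- exponents equal at t : from comp at 2t < s
      have hexp : p.1 = q.1 := by
        have h2t := heq (2 * t) (by omega)
        have e1 : (2 * t) % 2 = 0 := by omega
        have e3 : (2 * t) / 2 = t := by omega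
        rw [comp, comp, if_pos e1, if_pos e1, e3, hp, hq] at h2t
        simpa using h2t
      exact fval_mono t τ σ hτ hσ
        (fun u hu => hpair u (by omega)) p.1 p.2 q.1 q.2
        (by rw [hp]) (by rw [hq]) (Or.inr ⟨hexp, hlt⟩)

end Aux

/-- if the strict order of the linear order `X` is well-founded, then the strict
order `<_{X^ω}` on `X^ω` (the valid exponent-decreasing sequences) is well-founded. -/
theorem stmt_5 {X : Type*} [LinearOrder X]
    (hwf : WellFounded ((· < ·) : X → X → Prop)) :
    WellFounded (fun τ σ : {l : List (ℕ × X) // IsExpSeq l} => XOmegaLt τ.1 σ.1) := by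
  haveI : WellFoundedLT X := ⟨hwf⟩
  have hsub : Subrelation (fun τ σ : {l : List (ℕ × X) // IsExpSeq l} => XOmegaLt τ.1 σ.1)
      (InvImage (· < ·) (fun τ : {l : List (ℕ × X) // IsExpSeq l} => fval τ.1)) := by
    intro τ σ h
    exact fval_strictMono τ.2 σ.2 h
  exact Subrelation.wf hsub (InvImage.wf _ Ordinal.lt_wf)
end

section
/- (Ordered Ramsey Theorem for ℕ.) Let P be a finite partial order and let c be a right-ordered colouring of pairs of natural numbers with values in P. Then there exists an infinite set H ⊆ ℕ that is c-homogeneous. -/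
/-- A colouring of pairs `{(x,y) : x < y}` with values in a partial order `P` is right-ordered
if `c(x,y) ≤ c(x,y')` whenever `x < y ≤ y'`. -/
def RightOrdered {P : Type*} [PartialOrder P] (c : ℕ → ℕ → P) : Prop :=
  ∀ x y y', x < y → y ≤ y' → c x y ≤ c x y'

/-- `H` is `c`-homogeneous: `c` takes a single constant value on all pairs from `H`. -/
def Homogeneous {P : Type*} (c : ℕ → ℕ → P) (H : Set ℕ) : Prop :=
  ∃ p, ∀ x ∈ H, ∀ y ∈ H, x < y → c x y = p

/-- A monotone sequence into a finite partial order is eventually constant. -/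
lemma monotone_eventually_const {P : Type*} [PartialOrder P] [Finite P]
    (g : ℕ → P) (hg : Monotone g) : ∃ N, ∀ n, N ≤ n → g n = g N := by
  by_contra h
  push_neg at h
  choose t ht1 ht2 using h
  -- iterate t to get a strictly increasing sequence of values
  let φ : ℕ → ℕ := fun k => (fun m => t m)^[k] 0
  have key : ∀ k, g (φ k) < g (φ (k + 1)) := by
    intro k
    have : φ (k + 1) = t (φ k) := Function.iterate_succ_apply' _ _ _
    rw [this]
    exact lt_of_le_of_ne (hg (ht1 (φ k))) (Ne.symm (ht2 (φ k)))
  have sm : StrictMono (fun k => g (φ k)) := strictMono_nat_of_lt_succ key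
  exact Finite.false (Finite.of_injective _ sm.injective)

/-- Ordered Ramsey Theorem for ℕ: for every finite partial order `P` and every
right-ordered colouring `c` of pairs of natural numbers with values in `P`, there exists an
infinite `c`-homogeneous set `H ⊆ ℕ`. -/
theorem stmt_9 {P : Type*} [PartialOrder P] [Finite P]
    (c : ℕ → ℕ → P) (hc : RightOrdered c) :
    ∃ H : Set ℕ, H.Infinite ∧ Homogeneous c H := by
  -- for each x, the row y ↦ c x y stabilizes past some point s x, to value f x
  have hrow : ∀ x : ℕ, ∃ s : ℕ, x < s ∧ ∀ y, s ≤ y → c x y = c x s := by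
    intro x
    have hg : Monotone (fun n => c x (x + 1 + n)) := by
      intro a b hab
      exact hc x (x + 1 + a) (x + 1 + b) (by omega) (by omega)
    obtain ⟨N, hN⟩ := monotone_eventually_const _ hg
    refine ⟨x + 1 + N, by omega, fun y hy => ?_⟩
    have : y = x + 1 + (y - x - 1) := by omega
    rw [this]
    exact hN (y - x - 1) (by omega)
  choose s hs1 hs2 using hrow
  set f : ℕ → P := fun x => c x (s x) with hf
  obtain ⟨p, hp⟩ := Finite.exists_infinite_fiber f
  have hA : (f ⁻¹' {p}).Infinite := Set.infinite_coe_iff.mp hp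
  -- build an increasing sequence within A passing all stabilization points
  have step : ∀ b : ℕ, ∃ a ∈ f ⁻¹' {p}, b < a := fun b => hA.exists_gt b
  let h : ℕ → ℕ := fun k =>
    Nat.rec (step 0).choose (fun _ prev => (step (max prev (s prev))).choose) k
  have hmem : ∀ k, h k ∈ f ⁻¹' {p} := by
    intro k
    cases k with
    | zero => exact (step 0).choose_spec.1
    | succ k => exact (step (max (h k) (s (h k)))).choose_spec.1
  have hstep : ∀ k, max (h k) (s (h k)) < h (k + 1) := fun k =>
    (step (max (h k) (s (h k)))).choose_spec.2
  have hsm : StrictMono h := strictMono_nat_of_lt_succ fun k =>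
    lt_of_le_of_lt (le_max_left _ _) (hstep k)
  refine ⟨Set.range h, Set.infinite_range_of_injective hsm.injective, p, ?_⟩
  rintro x ⟨i, rfl⟩ y ⟨j, rfl⟩ hxy
  have hij : i < j := hsm.lt_iff_lt.mp hxy
  have hsy : s (h i) < h j := by
    calc s (h i) ≤ max (h i) (s (h i)) := le_max_right _ _
    _ < h (i + 1) := hstep i
    _ ≤ h j := hsm.le_iff_le.mpr hij
  have := hs2 (h i) (h j) hsy.le
  have hmemi := hmem i
  simp only [Set.mem_preimage, Set.mem_singleton_iff, hf] at hmemi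
  rw [this, hmemi]
end

section
/- Fix n ∈ ℕ and a sequence (U_i)_{i≥0} of subsets of {1,…,n}, with the reset functions and the cycle-completion relation defined as in the context. Then for every i ≥ 0, the set V_i := ⋃_{reset_{U_i}(i) < h ≤ i} U_h completes a cycle at stage i. -/
-- `resetAux n U i A` is the integer `reset_A(i)` of the paper: `reset_A(0) = -1`, and
-- `reset_A(i+1) = i` if some `B ⊆ {1,…,n}` with `B ⊇ A` completes a cycle at stage `i`
-- (i.e. `⋃_{reset_B(i) < h ≤ i} U_h = B`), and `reset_A(i+1) = reset_A(i)` otherwise.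
open Classical in
noncomputable def resetAux (n : ℕ) (U : ℕ → Finset ℕ) : ℕ → Finset ℕ → ℤ
  | 0 => fun _ => -1
  | i + 1 => fun A =>
      if ∃ B, B ⊆ Finset.Icc 1 n ∧ A ⊆ B ∧
          ((Finset.range (i + 1)).filter
            (fun h : ℕ => resetAux n U i B < (h : ℤ))).biUnion U = B
      then (i : ℤ)
      else resetAux n U i A

/-- `B` completes a cycle at stage `i`: `⋃_{reset_B(i) < h ≤ i} U_h = B`. -/
def CompletesCycle (n : ℕ) (U : ℕ → Finset ℕ) (i : ℕ) (B : Finset ℕ) : Prop :=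
  ((Finset.range (i + 1)).filter (fun h : ℕ => resetAux n U i B < (h : ℤ))).biUnion U = B

/-- `V_i := ⋃_{reset_{U_i}(i) < h ≤ i} U_h`. -/
noncomputable def V (n : ℕ) (U : ℕ → Finset ℕ) (i : ℕ) : Finset ℕ :=
  ((Finset.range (i + 1)).filter (fun h : ℕ => resetAux n U i (U i) < (h : ℤ))).biUnion U

section Aux
variable {n : ℕ} {U : ℕ → Finset ℕ}

open Classical in
lemma resetAux_succ (n : ℕ) (U : ℕ → Finset ℕ) (i : ℕ) (A : Finset ℕ) :
    resetAux n U (i+1) A =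
      if ∃ B, B ⊆ Finset.Icc 1 n ∧ A ⊆ B ∧ CompletesCycle n U i B then (i : ℤ)
      else resetAux n U i A := rfl

lemma resetAux_lt : ∀ (i : ℕ) (A : Finset ℕ), resetAux n U i A < (i : ℤ)
  | 0, A => by simp [resetAux]
  | (i+1), A => by
      rw [resetAux_succ]; split
      · exact_mod_cast Nat.lt_succ_self i
      · exact lt_trans (resetAux_lt i A) (by exact_mod_cast Nat.lt_succ_self i)

lemma neg_one_le_resetAux : ∀ (i : ℕ) (A : Finset ℕ), (-1 : ℤ) ≤ resetAux n U i A
  | 0, _ => le_rfl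
  | (i+1), A => by
      rw [resetAux_succ]; split
      · omega
      · exact neg_one_le_resetAux i A

lemma resetAux_le_succ (i : ℕ) (A : Finset ℕ) :
    resetAux n U i A ≤ resetAux n U (i+1) A := by
  rw [resetAux_succ]; split
  · exact le_of_lt (resetAux_lt i A)
  · exact le_rfl

lemma resetAux_mono {i j : ℕ} (h : i ≤ j) (A : Finset ℕ) :
    resetAux n U i A ≤ resetAux n U j A := by
  induction j, h using Nat.le_induction with
  | base => exact le_rfl
  | succ j hj ih => exact ih.trans (resetAux_le_succ j A)

lemma resetAux_ge_of_cc {A B : Finset ℕ} {j i : ℕ} (hB : B ⊆ Finset.Icc 1 n)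
    (hAB : A ⊆ B) (hcc : CompletesCycle n U j B) (hji : j < i) :
    (j : ℤ) ≤ resetAux n U i A := by
  have h1 : resetAux n U (j+1) A = (j : ℤ) := by
    rw [resetAux_succ, if_pos ⟨B, hB, hAB, hcc⟩]
  calc (j : ℤ) = resetAux n U (j+1) A := h1.symm
    _ ≤ resetAux n U i A := resetAux_mono hji A

lemma resetAux_anti {A A' : Finset ℕ} (h : A ⊆ A') :
    ∀ i, resetAux n U i A' ≤ resetAux n U i A
  | 0 => le_rfl
  | (i+1) => by
      rw [resetAux_succ, resetAux_succ]
      by_cases h' : ∃ B, B ⊆ Finset.Icc 1 n ∧ A' ⊆ B ∧ CompletesCycle n U i B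
      · obtain ⟨B, h1, h2, h3⟩ := h'
        rw [if_pos ⟨B, h1, h2, h3⟩, if_pos ⟨B, h1, h.trans h2, h3⟩]
      · rw [if_neg h']
        split
        · exact le_of_lt (resetAux_lt i A')
        · exact resetAux_anti h i

lemma exists_witness (n : ℕ) (U : ℕ → Finset ℕ) :
    ∀ (i : ℕ) (A : Finset ℕ), resetAux n U i A = -1 ∨
      ∃ t : ℕ, resetAux n U i A = (t : ℤ) ∧ t < i ∧
        ∃ B, B ⊆ Finset.Icc 1 n ∧ A ⊆ B ∧ CompletesCycle n U t B
  | 0, A => Or.inl rfl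
  | (i+1), A => by
      by_cases h : ∃ B, B ⊆ Finset.Icc 1 n ∧ A ⊆ B ∧ CompletesCycle n U i B
      · exact Or.inr ⟨i, by rw [resetAux_succ, if_pos h], Nat.lt_succ_self i, h⟩
      · rw [resetAux_succ, if_neg h]
        rcases exists_witness n U i A with h' | ⟨t, h1, h2, h3⟩
        · exact Or.inl h'
        · exact Or.inr ⟨t, h1, lt_trans h2 (Nat.lt_succ_self i), h3⟩

lemma cc_subset_Icc (hU : ∀ i, U i ⊆ Finset.Icc 1 n) {j : ℕ} {B : Finset ℕ}
    (h : CompletesCycle n U j B) : B ⊆ Finset.Icc 1 n := by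
  intro x hx
  rw [← h, Finset.mem_biUnion] at hx
  obtain ⟨a, _, hx⟩ := hx
  exact hU a hx

lemma mem_cycleUnion {t : ℤ} {g : ℕ} {x : ℕ} :
    x ∈ ((Finset.range (g+1)).filter (fun h : ℕ => t < (h : ℤ))).biUnion U ↔
      ∃ h, h ≤ g ∧ t < (h : ℤ) ∧ x ∈ U h := by
  simp [Finset.mem_biUnion, Finset.mem_filter, Finset.mem_range, Nat.lt_succ_iff, and_assoc]

lemma exists_max (hU : ∀ i, U i ⊆ Finset.Icc 1 n) (p : ℕ) (C₀ : Finset ℕ)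
    (h : CompletesCycle n U p C₀) :
    ∃ C, CompletesCycle n U p C ∧ C₀ ⊆ C ∧
      ∀ E, CompletesCycle n U p E → C ⊆ E → E = C := by
  classical
  set S := (Finset.Icc 1 n).powerset.filter
    (fun E => CompletesCycle n U p E ∧ C₀ ⊆ E) with hS
  have hne : S.Nonempty :=
    ⟨C₀, by simp [hS, Finset.mem_filter, Finset.mem_powerset, cc_subset_Icc hU h, h]⟩
  obtain ⟨C, hCS, hmax⟩ := S.exists_maximal hne
  rw [hS, Finset.mem_filter, Finset.mem_powerset] at hCS
  refine ⟨C, hCS.2.1, hCS.2.2, ?_⟩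
  intro E hccE hCE
  by_contra hne'
  have hES : E ∈ S := by
    rw [hS, Finset.mem_filter, Finset.mem_powerset]
    exact ⟨cc_subset_Icc hU hccE, hccE, hCS.2.2.trans hCE⟩
  exact hne' (Finset.Subset.antisymm (hmax hES hCE) hCE)

end Aux

section Main
variable {n : ℕ} {U : ℕ → Finset ℕ}

/-- Key lemma: if `C` is a maximal completing set at stage `r`, and every superset of `C`
completing at a stage in `(r, g]` equals `C`, then `U g ⊆ C`. -/
lemma lemM (hU : ∀ i, U i ⊆ Finset.Icc 1 n) :
    ∀ r : ℕ, ∀ C : Finset ℕ, CompletesCycle n U r C →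
      (∀ E, CompletesCycle n U r E → C ⊆ E → E = C) →
      ∀ g : ℕ, r < g →
      (∀ E (j : ℕ), C ⊆ E → r < j → j ≤ g → CompletesCycle n U j E → E = C) →
      U g ⊆ C := by
  intro r
  induction r using Nat.strong_induction_on with
  | _ r IHr =>
  intro C hC hmax g
  induction g using Nat.strong_induction_on with
  | _ g IHg =>
  intro hrg hyp
  by_contra hUg
  -- all U g' for g' ∈ (r,g) are inside C
  have hsub : ∀ g', r < g' → g' < g → U g' ⊆ C := by
    intro g' h1 h2
    exact IHg g' h2 h1 (fun E j a b c d => hyp E j a b (c.trans h2.le) d)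
  set F := C ∪ U g with hF
  have hCF : C ⊆ F := Finset.subset_union_left
  have hFC : ¬ F ⊆ C := fun h => hUg ((Finset.subset_union_right).trans h)
  -- any completing superset of F at a stage t < g has t ≤ resetAux n U r C
  have hFwit : ∀ (t : ℕ) (E : Finset ℕ), F ⊆ E → t < g → CompletesCycle n U t E →
      (t : ℤ) ≤ resetAux n U r C := by
    intro t E hFE htg hccE
    have hCE : C ⊆ E := hCF.trans hFE
    rcases lt_trichotomy t r with h1 | h1 | h1
    · exact resetAux_ge_of_cc (cc_subset_Icc hU hccE) hCE hccE h1
    · exfalso; subst h1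
      exact hFC ((hmax E hccE hCE) ▸ hFE)
    · exfalso
      exact hFC ((hyp E t hCE h1 (Nat.le_of_lt_succ (Nat.lt_succ_of_lt htg)) hccE) ▸ hFE)
  rcases exists_witness n U r C with hp | ⟨p, hpC, hpr, C'', hIcc'', hCC'', hcc''⟩
  · -- resetAux n U r C = -1
    have hqF : resetAux n U g F = -1 := by
      rcases exists_witness n U g F with h | ⟨t, ht, htg, E, hEIcc, hFE, hccE⟩
      · exact h
      · exfalso
        have := hFwit t E hFE htg hccE
        rw [hp] at this; omega
    have hccF : CompletesCycle n U g F := by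
      show _ = F
      ext x
      rw [mem_cycleUnion, hqF]
      constructor
      · rintro ⟨h, hhg, _, hx⟩
        rcases Nat.lt_or_ge h (r+1) with h1 | h1
        · have hxC : x ∈ C := by
            rw [← hC, mem_cycleUnion]
            exact ⟨h, Nat.lt_succ_iff.mp h1, by rw [hp]; omega, hx⟩
          exact Finset.mem_union_left _ hxC
        · rcases eq_or_lt_of_le hhg with he | hlt
          · exact Finset.mem_union_right _ (he ▸ hx)
          · exact Finset.mem_union_left _ (hsub h h1 hlt hx)
      · intro hx
        rcases Finset.mem_union.mp hx with hx | hx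
        · rw [← hC, mem_cycleUnion] at hx
          obtain ⟨h, hhr, _, hx⟩ := hx
          exact ⟨h, hhr.trans hrg.le, by omega, hx⟩
        · exact ⟨g, le_rfl, by omega, hx⟩
    exact hFC ((hyp F g hCF hrg le_rfl hccF) ▸ Finset.Subset.refl F)
  · -- resetAux n U r C = p ≥ 0, with witness C'' ⊇ C completing at p
    obtain ⟨Cs, hccCs, hsubCs, hmaxCs⟩ := exists_max hU p C'' hcc''
    have hCCs : C ⊆ Cs := hCC''.trans hsubCs
    have hypStar : ∀ E (j : ℕ), Cs ⊆ E → p < j → j ≤ g → CompletesCycle n U j E → E = Cs := by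
      intro E j hCsE hpj hjg hccE
      have hCE : C ⊆ E := hCCs.trans hCsE
      rcases lt_trichotomy j r with h1 | h1 | h1
      · exfalso
        have h2 : (j : ℤ) ≤ resetAux n U r C :=
          resetAux_ge_of_cc (cc_subset_Icc hU hccE) hCE hccE h1
        rw [hpC] at h2; exact absurd hpj (by exact_mod_cast not_lt.mpr (by exact_mod_cast h2))
      · subst h1
        have hEC : E = C := hmax E hccE hCE
        exact Finset.Subset.antisymm (hEC ▸ hCCs) hCsE
      · have hEC : E = C := hyp E j hCE h1 hjg hccE
        exact Finset.Subset.antisymm (hEC ▸ hCCs) hCsE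
    have hUsub : ∀ g', p < g' → g' ≤ g → U g' ⊆ Cs := by
      intro g' h1 h2
      exact IHr p hpr Cs hccCs (fun E a b => hmaxCs E a b) g' h1
        (fun E j a b c d => hypStar E j a b (c.trans h2) d)
    have hFCs : F ⊆ Cs :=
      Finset.union_subset hCCs (hUsub g (hpr.trans hrg) le_rfl)
    have hqF : resetAux n U g F = (p : ℤ) := by
      refine le_antisymm ?_ (resetAux_ge_of_cc (cc_subset_Icc hU hccCs) hFCs hccCs (hpr.trans hrg))
      rcases exists_witness n U g F with h | ⟨t, ht, htg, E, hEIcc, hFE, hccE⟩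
      · rw [h]; omega
      · rw [ht]
        have := hFwit t E hFE htg hccE
        rw [hpC] at this; exact this
    have hccF : CompletesCycle n U g F := by
      show _ = F
      ext x
      rw [mem_cycleUnion, hqF]
      constructor
      · rintro ⟨h, hhg, hph, hx⟩
        rcases Nat.lt_or_ge h (r+1) with h1 | h1
        · have hxC : x ∈ C := by
            rw [← hC, mem_cycleUnion]
            exact ⟨h, Nat.lt_succ_iff.mp h1, by rw [hpC]; exact hph, hx⟩
          exact Finset.mem_union_left _ hxC
        · rcases eq_or_lt_of_le hhg with he | hlt
          · exact Finset.mem_union_right _ (he ▸ hx)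
          · exact Finset.mem_union_left _ (hsub h h1 hlt hx)
      · intro hx
        rcases Finset.mem_union.mp hx with hx | hx
        · rw [← hC, mem_cycleUnion] at hx
          obtain ⟨h, hhr, hph, hx⟩ := hx
          rw [hpC] at hph
          exact ⟨h, hhr.trans hrg.le, hph, hx⟩
        · refine ⟨g, le_rfl, ?_, hx⟩
          exact_mod_cast hpr.trans hrg
    exact hFC ((hyp F g hCF hrg le_rfl hccF) ▸ Finset.Subset.refl F)

end Main


/-- for every `i`, the set `V_i = ⋃_{reset_{U_i}(i) < h ≤ i} U_h` completes a
cycle at stage `i`. -/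
theorem stmt_10 (n : ℕ) (U : ℕ → Finset ℕ) (hU : ∀ i, U i ⊆ Finset.Icc 1 n) :
    ∀ i, CompletesCycle n U i (V n U i) := by
  intro i
  have hUV : U i ⊆ V n U i := by
    intro x hx
    rw [V, mem_cycleUnion]
    exact ⟨i, le_rfl, resetAux_lt i (U i), hx⟩
  have h1 : resetAux n U i (V n U i) ≤ resetAux n U i (U i) := resetAux_anti hUV i
  have h2 : resetAux n U i (U i) ≤ resetAux n U i (V n U i) := by
    rcases exists_witness n U i (U i) with h | ⟨r, hr, hri, C₀, hIcc₀, hsub₀, hcc₀⟩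
    · rw [h]; exact neg_one_le_resetAux i (V n U i)
    · obtain ⟨C, hccC, hC₀C, hmaxC⟩ := exists_max hU r C₀ hcc₀
      have hUiC : U i ⊆ C := hsub₀.trans hC₀C
      have hVC : V n U i ⊆ C := by
        intro x hx
        rw [V, mem_cycleUnion] at hx
        obtain ⟨h, hhi, hrh, hx⟩ := hx
        rw [hr] at hrh
        have hrh' : r < h := by exact_mod_cast hrh
        rcases eq_or_lt_of_le hhi with he | hlt
        · exact hUiC (he ▸ hx)
        · refine lemM hU r C hccC hmaxC h hrh' ?_ hx
          intro E j hCE hrj hjh hccE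
          exfalso
          have hj : (j : ℤ) ≤ resetAux n U i (U i) :=
            resetAux_ge_of_cc (cc_subset_Icc hU hccE) (hUiC.trans hCE) hccE (lt_of_le_of_lt hjh hlt)
          rw [hr] at hj
          exact absurd hrj (by exact_mod_cast not_lt.mpr (by exact_mod_cast hj))
      calc resetAux n U i (U i) = (r : ℤ) := hr
        _ ≤ resetAux n U i (V n U i) :=
          resetAux_ge_of_cc (cc_subset_Icc hU hccC) hVC hccC hri
  have heq : resetAux n U i (V n U i) = resetAux n U i (U i) := le_antisymm h1 h2
  show _ = V n U i
  rw [heq]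
  rfl
end

section
/- Fix n ∈ ℕ and a sequence (U_i)_{i≥0} of subsets of {1,…,n}, with the reset functions and the cycle-completion relation defined as in the context. Then for every i ≥ 0, V_i := ⋃_{reset_{U_i}(i) < h ≤ i} U_h is the UNIQUE subset of {1,…,n} completing a cycle at stage i: if W ⊆ {1,…,n} completes a cycle at stage i, then W = V_i. -/
namespace Stmt11

variable (n : ℕ) (U : ℕ → Finset ℕ)

/-- `M a b = ⋃_{a < h ≤ b} U_h`. -/
def M (a : ℤ) (b : ℕ) : Finset ℕ :=
  ((Finset.range (b + 1)).filter (fun h : ℕ => a < (h : ℤ))).biUnion U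

lemma V_def (i : ℕ) : V n U i = M U (resetAux n U i (U i)) i := rfl

lemma cc_def (i : ℕ) (B : Finset ℕ) :
    CompletesCycle n U i B ↔ M U (resetAux n U i B) i = B := Iff.rfl

open Classical in
lemma resetAux_succ (i : ℕ) (A : Finset ℕ) :
    resetAux n U (i + 1) A =
      if ∃ B, B ⊆ Finset.Icc 1 n ∧ A ⊆ B ∧ CompletesCycle n U i B
      then (i : ℤ) else resetAux n U i A := rfl

lemma U_subset_M {a : ℤ} {h b : ℕ} (h1 : a < (h : ℤ)) (h2 : h ≤ b) :
    U h ⊆ M U a b :=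
  Finset.subset_biUnion_of_mem U (by simp [Finset.mem_filter, Nat.lt_succ_iff, h1, h2])

lemma M_subset_iff {a : ℤ} {b : ℕ} {X : Finset ℕ} :
    M U a b ⊆ X ↔ ∀ h : ℕ, h ≤ b → a < (h : ℤ) → U h ⊆ X := by
  rw [M, Finset.biUnion_subset]
  constructor
  · intro H h h1 h2
    exact H h (by simp [Finset.mem_filter, Nat.lt_succ_iff, h1, h2])
  · intro H h hh
    simp only [Finset.mem_filter, Finset.mem_range, Nat.lt_succ_iff] at hh
    exact H h hh.1 hh.2

lemma M_mono {a a' : ℤ} {b b' : ℕ} (ha : a' ≤ a) (hb : b ≤ b') :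
    M U a b ⊆ M U a' b' := by
  rw [M_subset_iff]
  intro h h1 h2
  exact U_subset_M U (lt_of_le_of_lt ha h2) (h1.trans hb)

variable {U} in
lemma M_subset_Icc (hU : ∀ i, U i ⊆ Finset.Icc 1 n) {a : ℤ} {b : ℕ} :
    M U a b ⊆ Finset.Icc 1 n :=
  Finset.biUnion_subset.2 fun h _ => hU h

lemma neg_one_le : ∀ (i : ℕ) (A : Finset ℕ), -1 ≤ resetAux n U i A
  | 0, _ => le_refl _
  | i + 1, A => by
      rw [resetAux_succ]
      split
      · omega
      · exact neg_one_le i A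

lemma lt_self : ∀ (i : ℕ) (A : Finset ℕ), resetAux n U i A < (i : ℤ)
  | 0, _ => by norm_num [resetAux]
  | i + 1, A => by
      rw [resetAux_succ]
      split
      · omega
      · have := lt_self i A; omega

lemma mono_stage {i i' : ℕ} (h : i ≤ i') (A : Finset ℕ) :
    resetAux n U i A ≤ resetAux n U i' A := by
  induction i', h using Nat.le_induction with
  | base => exact le_refl _
  | succ i' h IH =>
      refine IH.trans ?_
      rw [resetAux_succ]
      split
      · exact (lt_self n U i' A).le
      · exact le_refl _

lemma anti (i : ℕ) {A A' : Finset ℕ} (h : A ⊆ A') :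
    resetAux n U i A' ≤ resetAux n U i A := by
  induction i with
  | zero => exact le_refl _
  | succ i IH =>
      rw [resetAux_succ, resetAux_succ]
      by_cases h2 : ∃ B, B ⊆ Finset.Icc 1 n ∧ A' ⊆ B ∧ CompletesCycle n U i B
      · obtain ⟨B, hB1, hB2, hB3⟩ := h2
        rw [if_pos ⟨B, hB1, hB2, hB3⟩, if_pos ⟨B, hB1, h.trans hB2, hB3⟩]
      · rw [if_neg h2]
        split
        · exact (lt_self n U i A').le
        · exact IH

/-- Existence and uniqueness hold at all stages below `i₀`. -/
def Good (i₀ : ℕ) : Prop :=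
  ∀ j, j < i₀ → CompletesCycle n U j (V n U j) ∧
    ∀ W, W ⊆ Finset.Icc 1 n → CompletesCycle n U j W → W = V n U j

variable {n U}

lemma d1 (hU : ∀ i, U i ⊆ Finset.Icc 1 n) {i₀ : ℕ} (hg : Good n U i₀)
    {A : Finset ℕ} {j i : ℕ} (hji : j < i) (hi : i ≤ i₀) (hA : A ⊆ V n U j) :
    (j : ℤ) ≤ resetAux n U i A := by
  have h1 : resetAux n U (j + 1) A = (j : ℤ) := by
    rw [resetAux_succ,
      if_pos ⟨V n U j, M_subset_Icc n hU, hA, (hg j (lt_of_lt_of_le hji hi)).1⟩]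
  calc (j : ℤ) = resetAux n U (j + 1) A := h1.symm
    _ ≤ resetAux n U i A := mono_stage n U hji A

lemma d2 {i₀ : ℕ} (hg : Good n U i₀) :
    ∀ i, i ≤ i₀ → ∀ (A : Finset ℕ) (s : ℕ), resetAux n U i A = (s : ℤ) → A ⊆ V n U s := by
  intro i
  induction i with
  | zero =>
      intro _ A s h
      exfalso
      have : (-1 : ℤ) = (s : ℤ) := h
      omega
  | succ i IH =>
      intro hi A s h
      rw [resetAux_succ] at h
      split at h
      · next hc =>
          obtain ⟨B, hB1, hB2, hB3⟩ := hc
          have hsi : s = i := by exact_mod_cast h.symm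
          have hBV : B = V n U i := (hg i (by omega)).2 B hB1 hB3
          rw [hsi, ← hBV]
          exact hB2
      · exact IH (by omega) A s h

lemma d3 (hU : ∀ i, U i ⊆ Finset.Icc 1 n) {i₀ : ℕ} (hg : Good n U i₀)
    {A : Finset ℕ} {i j : ℕ} (hi : i ≤ i₀) (h1 : resetAux n U i A < (j : ℤ))
    (h2 : j < i) (hA : A ⊆ V n U j) : False := by
  have := d1 hU hg h2 hi hA
  omega

/-- The key "K" lemma: if no `U_k`, `s < k ≤ i`, has reset below `s`, then
`⋃_{s < h ≤ i} U_h ⊆ V_s`. -/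
lemma kk (hU : ∀ i, U i ⊆ Finset.Icc 1 n) {i₀ : ℕ} (hg : Good n U i₀) {i s : ℕ}
    (hi : i ≤ i₀)
    (hs : ∀ k, s < k → k ≤ i → (s : ℤ) ≤ resetAux n U k (U k)) :
    M U (s : ℤ) i ⊆ V n U s := by
  have main : ∀ h, h ≤ i → s < h → U h ⊆ V n U s := by
    intro h
    induction h using Nat.strong_induction_on with
    | _ h IHh =>
      intro hhi hsh
      have hts := hs h hsh hhi
      rcases eq_or_lt_of_le hts with he | hlt2
      · exact d2 hg h (hhi.trans hi) (U h) s he.symm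
      · have h0 : (0 : ℤ) ≤ resetAux n U h (U h) := by omega
        obtain ⟨t, ht⟩ := Int.eq_ofNat_of_zero_le h0
        have hUht : U h ⊆ V n U t := d2 hg h (hhi.trans hi) (U h) t ht
        have hst : s < t := by rw [ht] at hlt2; exact_mod_cast hlt2
        have hth : t < h := by
          have := lt_self n U h (U h); rw [ht] at this; exact_mod_cast this
        have hti : t ≤ i := le_trans hth.le hhi
        have hVt : V n U t ⊆ V n U s := by
          have h1 : V n U t ⊆ M U (s : ℤ) t := M_mono U (hs t hst hti) le_rfl
          refine h1.trans ?_
          rw [M_subset_iff]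
          intro k hk1 hk2
          exact IHh k (lt_of_le_of_lt hk1 hth) (hk1.trans hti) (by exact_mod_cast hk2)
        exact hUht.trans hVt
  rw [M_subset_iff]
  intro h h1 h2
  exact main h h1 (by exact_mod_cast h2)

theorem main (hU : ∀ i, U i ⊆ Finset.Icc 1 n) :
    ∀ i, (CompletesCycle n U i (V n U i) ∧
        ∀ W, W ⊆ Finset.Icc 1 n → CompletesCycle n U i W → W = V n U i) ∧
      (∀ (A : Finset ℕ) (j : ℕ), resetAux n U i A < (j : ℤ) → j < i →
        resetAux n U i A ≤ resetAux n U j (U j)) := by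
  intro i
  induction i using Nat.strong_induction_on with
  | _ i IH =>
  have hg : Good n U i := fun j hj => (IH j hj).1
  -- the laminarity lemma L'(i)
  have hL : ∀ (A : Finset ℕ) (j : ℕ), resetAux n U i A < (j : ℤ) → j < i →
      resetAux n U i A ≤ resetAux n U j (U j) := by
    intro A j h1 h2
    by_contra hcon
    push_neg at hcon
    have hs0 : (0 : ℤ) ≤ resetAux n U i A := by
      have := neg_one_le n U j (U j); omega
    obtain ⟨s, hs⟩ := Int.eq_ofNat_of_zero_le hs0
    have hAV : A ⊆ V n U s := d2 hg i le_rfl A s hs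
    have hsj : s < j := by rw [hs] at h1; exact_mod_cast h1
    have hLj : resetAux n U j (U j) ≤ resetAux n U s (U s) :=
      (IH j h2).2 (U j) s (by rw [← hs]; exact hcon) hsj
    have hVsj : V n U s ⊆ V n U j := M_mono U hLj hsj.le
    exact d3 hU hg le_rfl h1 h2 (hAV.trans hVsj)
  refine ⟨⟨?_, ?_⟩, hL⟩
  · -- existence
    have hUi : U i ⊆ V n U i := U_subset_M U (lt_self n U i (U i)) le_rfl
    have h1 : resetAux n U i (V n U i) ≤ resetAux n U i (U i) := anti n U i hUi
    have h2 : resetAux n U i (U i) ≤ resetAux n U i (V n U i) := by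
      by_cases h : (0 : ℤ) ≤ resetAux n U i (U i)
      · obtain ⟨s, hsdef⟩ := Int.eq_ofNat_of_zero_le h
        have hsi : s < i := by
          have := lt_self n U i (U i); rw [hsdef] at this; exact_mod_cast this
        have hVVs : V n U i ⊆ V n U s := by
          have hks : ∀ k, s < k → k ≤ i → (s : ℤ) ≤ resetAux n U k (U k) := by
            intro k hk1 hk2
            rcases eq_or_lt_of_le hk2 with he | hlt
            · rw [he, ← hsdef]
            · rw [← hsdef]
              exact hL (U i) k (by rw [hsdef]; exact_mod_cast hk1) hlt
          have := kk hU hg le_rfl hks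
          rw [V_def, hsdef]
          exact this
        rw [hsdef]
        exact d1 hU hg hsi le_rfl hVVs
      · have hm1 : resetAux n U i (U i) = -1 := by
          have := neg_one_le n U i (U i); omega
        rw [hm1]
        exact neg_one_le n U i _
    have heq : resetAux n U i (V n U i) = resetAux n U i (U i) := le_antisymm h1 h2
    show M U (resetAux n U i (V n U i)) i = V n U i
    rw [heq]
    exact (Stmt11.V_def n U i).symm
  · -- uniqueness
    intro W hWIcc hWcc
    have hWeq : M U (resetAux n U i W) i = W := hWcc
    have hUiW : U i ⊆ W := by
      rw [← hWeq]; exact U_subset_M U (lt_self n U i W) le_rfl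
    have hws : resetAux n U i W ≤ resetAux n U i (U i) := anti n U i hUiW
    rcases eq_or_lt_of_le hws with heq | hlt
    · rw [← hWeq, V_def, heq]
    · exfalso
      have hs0 : (0 : ℤ) ≤ resetAux n U i (U i) := by
        have := neg_one_le n U i W; omega
      obtain ⟨s, hsdef⟩ := Int.eq_ofNat_of_zero_le hs0
      have hsi : s < i := by
        have := lt_self n U i (U i); rw [hsdef] at this; exact_mod_cast this
      set w : ℤ := resetAux n U i W with hw
      have hwm1 : -1 ≤ w := neg_one_le n U i W
      -- the finset of candidate stages
      set F : Finset ℕ :=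
        (Finset.range i).filter (fun k => w < (k : ℤ) ∧ resetAux n U k (U k) ≤ w) with hF
      have hFne : F.Nonempty := by
        refine ⟨(w + 1).toNat, ?_⟩
        have hcast : ((w + 1).toNat : ℤ) = w + 1 := Int.toNat_of_nonneg (by omega)
        have hlt' : ((w + 1).toNat : ℤ) < (i : ℤ) := by
          rw [hcast, hsdef] at *
          have : w < (s : ℤ) := by rw [← hsdef]; exact hlt
          have : (s : ℤ) < (i : ℤ) := by exact_mod_cast hsi
          omega
        have hlti : (w + 1).toNat < i := by exact_mod_cast hlt'
        simp only [hF, Finset.mem_filter, Finset.mem_range]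
        refine ⟨hlti, by omega, ?_⟩
        have := lt_self n U ((w + 1).toNat) (U ((w + 1).toNat))
        omega
      set j : ℕ := F.max' hFne with hj
      have hjF : j ∈ F := F.max'_mem hFne
      simp only [hF, Finset.mem_filter, Finset.mem_range] at hjF
      obtain ⟨hji, hwj, hjr⟩ := hjF
      have hjmax : ∀ k, k < i → w < (k : ℤ) → resetAux n U k (U k) ≤ w → k ≤ j := by
        intro k h1 h2 h3
        refine Finset.le_max' F k ?_
        simp only [hF, Finset.mem_filter, Finset.mem_range]
        exact ⟨h1, h2, h3⟩
      -- claim A: every k ∈ (j, i] has reset ≥ j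
      have claimA : ∀ k, j < k → k ≤ i → (j : ℤ) ≤ resetAux n U k (U k) := by
        intro k hk1 hk2
        by_contra hc
        push_neg at hc
        have hwk : w < resetAux n U k (U k) := by
          rcases eq_or_lt_of_le hk2 with he | hki
          · rw [he, hsdef]; rw [hsdef] at hlt; exact hlt
          · by_contra hc2
            push_neg at hc2
            have := hjmax k hki (lt_trans hwj (by exact_mod_cast hk1)) hc2
            omega
        have hLk : resetAux n U k (U k) ≤ resetAux n U j (U j) := by
          rcases eq_or_lt_of_le hk2 with he | hki
          · subst he
            exact hL (U k) j hc hk1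
          · exact (IH k hki).2 (U k) j hc hk1
        omega
      have hMji : M U (j : ℤ) i ⊆ V n U j := kk hU hg le_rfl claimA
      have hWVj : W ⊆ V n U j := by
        rw [← hWeq, M_subset_iff]
        intro h hhi hwh
        rcases le_or_gt h j with hle | hgt
        · exact U_subset_M U (lt_of_le_of_lt hjr hwh) hle
        · exact (U_subset_M U (by exact_mod_cast hgt) hhi).trans hMji
      have := d1 hU hg hji le_rfl hWVj
      omega

end Stmt11

/-- for every `i`, `V_i` is the unique subset of `{1,…,n}` completing a cycle at
stage `i`: any `W ⊆ {1,…,n}` completing a cycle at stage `i` equals `V_i`. -/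
theorem stmt_11 (n : ℕ) (U : ℕ → Finset ℕ) (hU : ∀ i, U i ⊆ Finset.Icc 1 n) :
    ∀ i, CompletesCycle n U i (V n U i) ∧
      ∀ W, W ⊆ Finset.Icc 1 n → CompletesCycle n U i W → W = V n U i := by
  intro i
  exact (Stmt11.main hU i).1
end

section
/- Fix n ∈ ℕ and a sequence (U_i)_{i≥0} of subsets of {1,…,n}, with the reset functions and the cycle-completion relation defined as in the context. Then for every i ≥ 0 and every subset A of {1,…,n}: A is reset at stage i (i.e., reset_A(i+1) = i via the first clause of the recursion) if and only if A ⊆ V_i. -/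
namespace Stmt13Aux

variable (n : ℕ) (U : ℕ → Finset ℕ)

/-- The union `⋃_{m < h ≤ i} U_h`. -/
noncomputable def seg (m : ℤ) (i : ℕ) : Finset ℕ :=
  ((Finset.range (i + 1)).filter (fun h : ℕ => m < (h : ℤ))).biUnion U

lemma mem_seg {x : ℕ} {m : ℤ} {i : ℕ} :
    x ∈ seg U m i ↔ ∃ h, h ≤ i ∧ m < (h : ℤ) ∧ x ∈ U h := by
  simp only [seg, Finset.mem_biUnion, Finset.mem_filter, Finset.mem_range, Nat.lt_succ_iff]
  tauto

lemma CC_iff {i : ℕ} {B : Finset ℕ} :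
    CompletesCycle n U i B ↔ seg U (resetAux n U i B) i = B := Iff.rfl

lemma V_eq (i : ℕ) : V n U i = seg U (resetAux n U i (U i)) i := rfl

lemma U_subset_seg {h i : ℕ} {m : ℤ} (h1 : h ≤ i) (h2 : m < (h : ℤ)) :
    U h ⊆ seg U m i := by
  intro x hx
  exact (mem_seg U).2 ⟨h, h1, h2, hx⟩

lemma seg_anti {m m' : ℤ} {i : ℕ} (h : m ≤ m') : seg U m' i ⊆ seg U m i := by
  intro x hx
  obtain ⟨l, hl1, hl2, hl3⟩ := (mem_seg U).1 hx
  exact (mem_seg U).2 ⟨l, hl1, lt_of_le_of_lt h hl2, hl3⟩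

lemma seg_split {s : ℤ} {t i : ℕ} (h2 : t ≤ i) :
    seg U s i ⊆ seg U s t ∪ seg U (t : ℤ) i := by
  intro x hx
  obtain ⟨l, hl1, hl2, hl3⟩ := (mem_seg U).1 hx
  rcases le_or_gt l t with h | h
  · exact Finset.mem_union_left _ ((mem_seg U).2 ⟨l, h, hl2, hl3⟩)
  · exact Finset.mem_union_right _ ((mem_seg U).2 ⟨l, hl1, by exact_mod_cast h, hl3⟩)

lemma resetAux_neg_one_le : ∀ (i : ℕ) (A : Finset ℕ), -1 ≤ resetAux n U i A := by
  intro i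
  induction i with
  | zero => intro A; simp [resetAux]
  | succ i ih =>
    intro A
    simp only [resetAux]
    split
    · omega
    · exact ih A

lemma resetAux_lt : ∀ (i : ℕ) (A : Finset ℕ), resetAux n U i A < (i : ℤ) := by
  intro i
  induction i with
  | zero => intro A; simp [resetAux]
  | succ i ih =>
    intro A
    simp only [resetAux]
    split
    · push_cast; omega
    · have := ih A; push_cast; omega

lemma resetAux_mono : ∀ (i j : ℕ) (A : Finset ℕ), i ≤ j →
    resetAux n U i A ≤ resetAux n U j A := by
  intro i j
  induction j with
  | zero =>
    intro A h
    have : i = 0 := Nat.le_zero.mp h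
    subst this; exact le_refl _
  | succ j ih =>
    intro A h
    rcases Nat.lt_or_ge i (j + 1) with h' | h'
    · have h1 : resetAux n U i A ≤ resetAux n U j A := ih A (by omega)
      have h2 : resetAux n U j A < (j : ℤ) := resetAux_lt n U j A
      simp only [resetAux]
      split
      · omega
      · exact h1
    · have : i = j + 1 := by omega
      subst this; exact le_refl _

lemma resetAux_succ_of_exists {i : ℕ} {A : Finset ℕ}
    (H : ∃ B, B ⊆ Finset.Icc 1 n ∧ A ⊆ B ∧ CompletesCycle n U i B) :
    resetAux n U (i + 1) A = (i : ℤ) := by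
  simp only [resetAux]
  exact if_pos H

lemma resetAux_spec : ∀ (i : ℕ) (A : Finset ℕ) (j : ℕ), resetAux n U i A = (j : ℤ) →
    j < i ∧ ∃ B, B ⊆ Finset.Icc 1 n ∧ A ⊆ B ∧ CompletesCycle n U j B := by
  intro i
  induction i with
  | zero => intro A j h; simp only [resetAux] at h; omega
  | succ i ih =>
    intro A j h
    simp only [resetAux] at h
    split at h
    · have : j = i := by exact_mod_cast h.symm
      subst this
      exact ⟨Nat.lt_succ_self _, ‹_›⟩
    · obtain ⟨h1, h2⟩ := ih A j h
      exact ⟨by omega, h2⟩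

lemma V_subset_Icc (hU : ∀ i, U i ⊆ Finset.Icc 1 n) (i : ℕ) :
    V n U i ⊆ Finset.Icc 1 n := by
  rw [V_eq]
  intro x hx
  obtain ⟨l, _, _, hl3⟩ := (mem_seg U).1 hx
  exact hU l hl3

lemma U_subset_V (i : ℕ) : U i ⊆ V n U i := by
  rw [V_eq]
  exact U_subset_seg U (le_refl i) (resetAux_lt n U i (U i))

/-- The main simultaneous induction. -/
theorem big (hU : ∀ i, U i ⊆ Finset.Icc 1 n) : ∀ i : ℕ,
    (∀ A : Finset ℕ, A ⊆ Finset.Icc 1 n →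
      ((∃ B, B ⊆ Finset.Icc 1 n ∧ A ⊆ B ∧ CompletesCycle n U i B) ↔ A ⊆ V n U i))
    ∧ (∀ r : ℕ, (r : ℤ) = resetAux n U i (U i) → V n U i ⊆ V n U r)
    ∧ (∀ h : ℕ, h < i → resetAux n U i (U i) < (h : ℤ) →
        resetAux n U i (U i) ≤ resetAux n U h (U h)) := by
  intro i
  induction i using Nat.strong_induction_on with
  | _ i IH =>
  -- Characterization lower bound: if A ⊆ V_j for j < i then reset_A(i) ≥ j.
  have charLB : ∀ (A : Finset ℕ) (j : ℕ), j < i → A ⊆ V n U j →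
      (j : ℤ) ≤ resetAux n U i A := by
    intro A j hj hAV
    have hA : A ⊆ Finset.Icc 1 n := hAV.trans (V_subset_Icc n U hU j)
    have h1 : resetAux n U (j + 1) A = (j : ℤ) :=
      resetAux_succ_of_exists n U (((IH j hj).1 A hA).mpr hAV)
    have h2 := resetAux_mono n U (j + 1) i A (by omega)
    omega
  -- Characterization upper bound: if reset_A(i) = j ≥ 0 then j < i and A ⊆ V_j.
  have charUB : ∀ (A : Finset ℕ), A ⊆ Finset.Icc 1 n → ∀ j : ℕ,
      resetAux n U i A = (j : ℤ) → j < i ∧ A ⊆ V n U j := by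
    intro A hA j hj
    obtain ⟨h1, h2⟩ := resetAux_spec n U i A j hj
    exact ⟨h1, ((IH j h1).1 A hA).mp h2⟩
  -- helper: every reset value ≥ 0 is a natural number
  have toNatCase : ∀ (k : ℕ) (A : Finset ℕ), resetAux n U k A = -1 ∨
      ∃ j : ℕ, resetAux n U k A = (j : ℤ) := by
    intro k A
    have := resetAux_neg_one_le n U k A
    rcases eq_or_lt_of_le this with h | h
    · exact Or.inl h.symm
    · exact Or.inr ⟨(resetAux n U k A).toNat, (Int.toNat_of_nonneg (by omega)).symm⟩
  -- Property E at stage i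
  have Ei : ∀ h : ℕ, h < i → resetAux n U i (U i) < (h : ℤ) →
      resetAux n U i (U i) ≤ resetAux n U h (U h) := by
    intro h hh hrh
    by_contra hcon
    push_neg at hcon
    have hge := resetAux_neg_one_le n U h (U h)
    -- reset_{U_i}(i) ≥ 0, call it r
    rcases toNatCase i (U i) with hri | ⟨r, hr⟩
    · omega
    have hrlt : r < h := by
      rw [hr] at hrh; exact_mod_cast hrh
    have hrlti : r < i := by omega
    -- E(h) at l = r gives reset_{U_h}(h) ≤ reset_{U_r}(r)
    have h1 : resetAux n U h (U h) ≤ resetAux n U r (U r) := by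
      rcases eq_or_lt_of_le hge with h' | h'
      · rw [← h']; exact resetAux_neg_one_le n U r (U r)
      · exact (IH h hh).2.2 r hrlt (by omega)
    -- V_r ⊆ V_h
    have h2 : V n U r ⊆ V n U h := by
      intro x hx
      rw [V_eq] at hx ⊢
      obtain ⟨l, hl1, hl2, hl3⟩ := (mem_seg U).1 hx
      refine (mem_seg U).2 ⟨l, by omega, by omega, hl3⟩
    -- U_i ⊆ V_r
    have h3 : (r < i) ∧ U i ⊆ V n U r := charUB (U i) (hU i) r hr
    have h4 : (h : ℤ) ≤ resetAux n U i (U i) := charLB (U i) h hh (h3.2.trans h2)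
    omega
  -- claim A: for r_i < h < i, V_h ⊆ V_{r_i}
  have claimA : ∀ h : ℕ, h < i → resetAux n U i (U i) < (h : ℤ) →
      ∀ r : ℕ, (r : ℤ) = resetAux n U i (U i) → V n U h ⊆ V n U r := by
    intro h
    induction h using Nat.strong_induction_on with
    | _ h IH2 =>
    intro hh hrh r hr
    have hE := Ei h hh hrh
    rcases toNatCase h (U h) with hrh' | ⟨s, hs⟩
    · omega
    have hsr : (r : ℤ) ≤ (s : ℤ) := by omega
    have hVhs : V n U h ⊆ V n U s := (IH h hh).2.1 s hs.symm
    rcases eq_or_lt_of_le hsr with h' | h'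
    · have : r = s := by exact_mod_cast h'
      subst this; exact hVhs
    · have hslt : (s : ℤ) < (h : ℤ) := by
        have := resetAux_lt n U h (U h); omega
      have hsh : s < h := by exact_mod_cast hslt
      have hsi : s < i := by omega
      exact hVhs.trans (IH2 s hsh hsi (by omega) r hr)
  -- Nest at stage i
  have Ni : ∀ r : ℕ, (r : ℤ) = resetAux n U i (U i) → V n U i ⊆ V n U r := by
    intro r hr x hx
    rw [V_eq] at hx
    obtain ⟨h, hl1, hl2, hl3⟩ := (mem_seg U).1 hx
    rcases eq_or_lt_of_le hl1 with h' | h'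
    · subst h'
      exact (charUB (U h) (hU h) r hr.symm).2 hl3
    · exact claimA h h' hl2 r hr (U_subset_V n U h hl3)
  refine ⟨?_, Ni, Ei⟩
  intro A hA
  constructor
  · -- forward direction
    rintro ⟨B, hB, hAB, hCC⟩
    have hUB : U i ⊆ B := by
      rw [CC_iff] at hCC
      rw [← hCC]
      exact U_subset_seg U (le_refl i) (resetAux_lt n U i B)
    -- m := reset_B(i) ≤ r_i
    have hm_le : resetAux n U i B ≤ resetAux n U i (U i) := by
      rcases toNatCase i B with h' | ⟨j, hj⟩
      · rw [h']; exact resetAux_neg_one_le n U i (U i)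
      · obtain ⟨hji, hBV⟩ := charUB B hB j hj
        have := charLB (U i) j hji (hUB.trans hBV)
        omega
    rcases eq_or_lt_of_le hm_le with heq | hlt
    · -- B = V_i
      rw [CC_iff] at hCC
      rw [V_eq, ← heq, hCC]
      exact hAB
    · -- contradiction via descent
      exfalso
      rcases toNatCase i (U i) with hri | ⟨r, hr⟩
      · have := resetAux_neg_one_le n U i B; omega
      have K : ∀ t : ℕ, t < i → resetAux n U i B < (t : ℤ) →
          seg U (t : ℤ) i ⊆ V n U t → False := by
        intro t
        induction t using Nat.strong_induction_on with
        | _ t IH3 =>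
        intro ti hmt hseg
        rcases le_or_gt (resetAux n U t (U t)) (resetAux n U i B) with hcase | hcase
        · -- B ⊆ V_t, contradiction with maximality
          have hBsub : B ⊆ V n U t := by
            rw [CC_iff] at hCC
            intro x hx
            rw [← hCC] at hx
            have hx2 : x ∈ seg U (resetAux n U t (U t)) i :=
              seg_anti U hcase hx
            have := seg_split U (s := resetAux n U t (U t)) (t := t) (i := i) (by omega) hx2
            rw [Finset.mem_union] at this
            rcases this with h' | h'
            · rw [V_eq]; exact h'
            · exact hseg h'
          have := charLB B t ti hBsub
          omega
        · -- go down to s := reset_{U_t}(t)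
          have hge := resetAux_neg_one_le n U i B
          rcases toNatCase t (U t) with h' | ⟨s, hs⟩
          · omega
          have hst : (s : ℤ) < (t : ℤ) := by
            have := resetAux_lt n U t (U t); omega
          have hsh : s < t := by exact_mod_cast hst
          refine IH3 s hsh (by omega) (by omega) ?_
          -- seg s i ⊆ V_s
          have hVts : V n U t ⊆ V n U s := (IH t ti).2.1 s hs.symm
          intro x hx
          have := seg_split U (s := (s : ℤ)) (t := t) (i := i) (by omega) hx
          rw [Finset.mem_union] at this
          rcases this with h' | h'
          · exact hVts (by rw [V_eq, ← hs] at *; exact h')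
          · exact hVts (hseg h')
      have hri2 : (r : ℤ) < i := by
        have := resetAux_lt n U i (U i); omega
      refine K r (by exact_mod_cast hri2) (by omega) ?_
      have : seg U (r : ℤ) i = V n U i := by rw [V_eq, ← hr]
      rw [this]
      exact Ni r hr.symm
  · -- backward direction: B := V_i works
    intro hAV
    refine ⟨V n U i, V_subset_Icc n U hU i, hAV, ?_⟩
    have hRV : resetAux n U i (V n U i) = resetAux n U i (U i) := by
      have hle : resetAux n U i (V n U i) ≤ resetAux n U i (U i) := by
        rcases toNatCase i (V n U i) with h' | ⟨j, hj⟩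
        · rw [h']; exact resetAux_neg_one_le n U i (U i)
        · obtain ⟨hji, hVj⟩ := charUB (V n U i) (V_subset_Icc n U hU i) j hj
          have := charLB (U i) j hji ((U_subset_V n U i).trans hVj)
          omega
      have hge : resetAux n U i (U i) ≤ resetAux n U i (V n U i) := by
        rcases toNatCase i (U i) with h' | ⟨r, hr⟩
        · rw [h']; exact resetAux_neg_one_le n U i (V n U i)
        · have hri : (r : ℤ) < i := by rw [← hr]; exact resetAux_lt n U i (U i)
          have := charLB (V n U i) r (by exact_mod_cast hri) (Ni r hr.symm)
          omega
      omega
    rw [CC_iff, hRV, ← V_eq]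

end Stmt13Aux

/-- for every `i` and every `A ⊆ {1,…,n}`, `A` is reset at stage `i` (i.e. some
`B ⊆ {1,…,n}` with `B ⊇ A` completes a cycle at stage `i`, the first clause of the recursion
defining `reset_A(i+1) = i`) if and only if `A ⊆ V_i`. -/
theorem stmt_13 (n : ℕ) (U : ℕ → Finset ℕ) (hU : ∀ i, U i ⊆ Finset.Icc 1 n) :
    ∀ i (A : Finset ℕ), A ⊆ Finset.Icc 1 n →
      ((∃ B, B ⊆ Finset.Icc 1 n ∧ A ⊆ B ∧ CompletesCycle n U i B) ↔ A ⊆ V n U i) :=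
  fun i A hA => (Stmt13Aux.big n U hU i).1 A hA
end

section
/- Let X be a linear order, let σ = (σ_i)_{i≥0} be an infinite <_{X^ω}-descending sequence, let c be the first-difference colouring of pairs defined from σ (c(i,j) := |σ_j| if σ_j is a proper initial segment of σ_i, and otherwise the least s with σ_i(s) ≠ σ_j(s)), and suppose H = {h_0 < h_1 < …} is infinite and c-homogeneous with colour c* = 2t (an even number). Then the sequence i ↦ b_t^{h_i} of t-th natural-number exponents of the σ_{h_i} would be strictly decreasing in ℕ, which is impossible; i.e., no infinite c-homogeneous set can have even colour. -/
section Aux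
variable {X : Type*} [LinearOrder X]

/-- Order on optional components: `none` below `some`, `some` vs `some` by `Sum.Lex`. -/
def OL (o₁ o₂ : Option (ℕ ⊕ X)) : Prop :=
  (o₁ = none ∧ o₂ ≠ none) ∨
  ∃ a b, o₁ = some a ∧ o₂ = some b ∧ Sum.Lex (· < ·) (· < ·) a b

lemma sumLex_trans {a b c : ℕ ⊕ X} (h1 : Sum.Lex (·<·) (·<·) a b)
    (h2 : Sum.Lex (·<·) (·<·) b c) : Sum.Lex (·<·) (·<·) a c := by
  cases h1 with
  | inl h => cases h2 with
    | inl h' => exact Sum.Lex.inl (h.trans h')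
    | sep => exact Sum.Lex.sep _ _
  | inr h => cases h2 with
    | inr h' => exact Sum.Lex.inr (h.trans h')
  | sep => cases h2 with
    | inr _ => exact Sum.Lex.sep _ _

lemma OL_ne {o₁ o₂ : Option (ℕ ⊕ X)} (h : OL o₁ o₂) : o₁ ≠ o₂ := by
  rcases h with ⟨h1, h2⟩ | ⟨a, b, h1, h2, h3⟩
  · intro he; exact h2 (he ▸ h1)
  · intro he
    rw [h1, h2] at he
    obtain rfl : a = b := Option.some_injective _ he
    cases h3 <;> simp_all

lemma OL_some_right {o₁ o₂ : Option (ℕ ⊕ X)} (h : OL o₁ o₂) : ∃ a, o₂ = some a := by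
  rcases h with ⟨h1, h2⟩ | ⟨a, b, h1, h2, h3⟩
  · exact Option.ne_none_iff_exists'.mp h2
  · exact ⟨b, h2⟩

lemma OL_trans {o₁ o₂ o₃ : Option (ℕ ⊕ X)} (h1 : OL o₁ o₂) (h2 : OL o₂ o₃) : OL o₁ o₃ := by
  rcases h1 with ⟨ha1, ha2⟩ | ⟨a, b, ha1, ha2, ha3⟩
  · obtain ⟨c, hc⟩ := OL_some_right h2
    exact Or.inl ⟨ha1, by simp [hc]⟩
  · rcases h2 with ⟨hb1, hb2⟩ | ⟨b', c, hb1, hb2, hb3⟩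
    · rw [ha2] at hb1; cases hb1
    · rw [ha2] at hb1
      obtain rfl : b = b' := Option.some_injective _ hb1
      exact Or.inr ⟨a, c, ha1, hb2, sumLex_trans ha3 hb3⟩

/-- First-difference comparison. -/
def D (τ σ : List (ℕ × X)) : Prop :=
  ∃ s, (∀ r, r < s → comp τ r = comp σ r) ∧ OL (comp τ s) (comp σ s)

omit [LinearOrder X] in
lemma comp_agree_of_prefix {τ σ : List (ℕ × X)} (hp : τ <+: σ)
    {r : ℕ} (hr : r < 2 * τ.length) : comp τ r = comp σ r := by
  obtain ⟨rest, rfl⟩ := hp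
  have hlt : r / 2 < τ.length := by omega
  unfold comp
  rw [List.getElem?_append_left hlt]

lemma D_of_lt {τ σ : List (ℕ × X)} (h : XOmegaLt τ σ) : D τ σ := by
  rcases h with ⟨hp, hne⟩ | ⟨s, hag, a, b, h1, h2, h3⟩
  · refine ⟨2 * τ.length, fun r hr => comp_agree_of_prefix hp hr, Or.inl ⟨?_, ?_⟩⟩
    · unfold comp
      simp [Nat.mul_mod_right, Nat.mul_div_cancel_left τ.length (by norm_num : 0 < 2)]
    · obtain ⟨rest, rfl⟩ := hp
      cases rest with
      | nil => simp at hne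
      | cons p rest' =>
        unfold comp
        rw [if_pos (Nat.mul_mod_right 2 _),
          Nat.mul_div_cancel_left τ.length (by norm_num : 0 < 2),
          List.getElem?_append_right (le_refl _)]
        simp
  · exact ⟨s, hag, Or.inr ⟨a, b, h1, h2, h3⟩⟩

lemma D_trans {τ ρ σ : List (ℕ × X)} (h1 : D τ ρ) (h2 : D ρ σ) : D τ σ := by
  obtain ⟨s1, hag1, hL1⟩ := h1
  obtain ⟨s2, hag2, hL2⟩ := h2
  rcases lt_trichotomy s1 s2 with hlt | rfl | hlt
  · exact ⟨s1, fun r hr => (hag1 r hr).trans (hag2 r (hr.trans hlt)),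
      (hag2 s1 hlt) ▸ hL1⟩
  · exact ⟨s1, fun r hr => (hag1 r hr).trans (hag2 r hr), OL_trans hL1 hL2⟩
  · exact ⟨s2, fun r hr => (hag1 r (hr.trans hlt)).trans (hag2 r hr),
      (hag1 s2 hlt) ▸ hL2⟩

end Aux

/-- if `H = {h_0 < h_1 < …}` is infinite and `c`-homogeneous with even colour
`c* = 2t`, then the sequence of `t`-th natural-number exponents (the components at position
`c*`) of the `σ_{h_i}` would be strictly decreasing in `ℕ`; this is impossible, so no infinite
`c`-homogeneous set can have even colour. -/
theorem stmt_15 {X : Type*} [LinearOrder X] (σs : ℕ → List (ℕ × X))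
    (hvalid : ∀ i, IsExpSeq (σs i))
    (hdesc : ∀ i, XOmegaLt (σs (i + 1)) (σs i))
    (h : ℕ → ℕ) (hmono : StrictMono h)
    (cstar : ℕ) (hhom : ∀ i j, i < j → firstDiff σs (h i) (h j) = cstar) :
    (cstar % 2 = 0 → ∀ i j, i < j → ∀ b b' : ℕ,
      comp (σs (h i)) cstar = some (Sum.inl b) →
      comp (σs (h j)) cstar = some (Sum.inl b') → b' < b) ∧
    cstar % 2 ≠ 0 := by
  classical
  -- descending chain in the `D` order
  have hchain : ∀ n m, m < n → D (σs n) (σs m) := by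
    intro n
    induction n with
    | zero => omega
    | succ n ih =>
      intro m hmn
      rcases Nat.lt_succ_iff_lt_or_eq.mp hmn with hlt | rfl
      · exact D_trans (D_of_lt (hdesc n)) (ih m hlt)
      · exact D_of_lt (hdesc m)
  -- for i < j, cstar is the first difference position, with OL comparison
  have key : ∀ i j, i < j →
      OL (comp (σs (h j)) cstar) (comp (σs (h i)) cstar) := by
    have main : ∀ i j, i < j →
        (¬(σs (h j) <+: σs (h i) ∧ σs (h j) ≠ σs (h i))) →
        OL (comp (σs (h j)) cstar) (comp (σs (h i)) cstar) := by
      intro i j hij hnp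
      have hfd := hhom i j hij
      rw [firstDiff, if_neg hnp] at hfd
      obtain ⟨s, hag, hL⟩ := hchain (h j) (h i) (hmono hij)
      have hsmem : s ∈ {s | comp (σs (h i)) s ≠ comp (σs (h j)) s} :=
        fun he => OL_ne hL he.symm
      have hsinf : sInf {s | comp (σs (h i)) s ≠ comp (σs (h j)) s} = s := by
        refine le_antisymm (Nat.sInf_le hsmem) (le_of_not_gt fun hlt => ?_)
        exact Nat.sInf_mem (⟨s, hsmem⟩ : Set.Nonempty _) (hag _ hlt).symm
      rw [hsinf] at hfd
      rwa [hfd] at hL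
    intro i j hij
    by_cases hp : σs (h j) <+: σs (h i) ∧ σs (h j) ≠ σs (h i)
    · -- prefix case is impossible: compare pair (j, j+1)
      exfalso
      have hfd := hhom i j hij
      rw [firstDiff, if_pos hp] at hfd
      have hnone : comp (σs (h j)) cstar = none := by
        rw [← hfd]
        unfold comp
        simp [Nat.mul_mod_right, Nat.mul_div_cancel_left (σs (h j)).length (by norm_num : 0 < 2)]
      by_cases hp2 : σs (h (j+1)) <+: σs (h j) ∧ σs (h (j+1)) ≠ σs (h j)
      · have hfd2 := hhom j (j+1) (Nat.lt_succ_self j)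
        rw [firstDiff, if_pos hp2] at hfd2
        have hlen : (σs (h (j+1))).length = (σs (h j)).length := by omega
        exact hp2.2 (List.IsPrefix.eq_of_length hp2.1 hlen)
      · have hOL := main j (j+1) (Nat.lt_succ_self j) hp2
        obtain ⟨a, ha⟩ := OL_some_right hOL
        rw [hnone] at ha; cases ha
    · exact main i j hij hp
  have part1 : cstar % 2 = 0 → ∀ i j, i < j → ∀ b b' : ℕ,
      comp (σs (h i)) cstar = some (Sum.inl b) →
      comp (σs (h j)) cstar = some (Sum.inl b') → b' < b := by
    intro _ i j hij b b' hb hb'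
    have hOL := key i j hij
    rw [hb, hb'] at hOL
    rcases hOL with ⟨h1, _⟩ | ⟨a, c, h1, h2, h3⟩
    · cases h1
    · obtain rfl : Sum.inl b' = a := Option.some_injective _ h1
      obtain rfl : Sum.inl b = c := Option.some_injective _ h2
      cases h3 with
      | inl hlt => exact hlt
  refine ⟨part1, fun hcst => ?_⟩
  -- every σs (h i) has a defined inl component at cstar
  have hex : ∀ i, ∃ b : ℕ, comp (σs (h i)) cstar = some (Sum.inl b) := by
    intro i
    obtain ⟨a, ha⟩ := OL_some_right (key i (i+1) (Nat.lt_succ_self i))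
    rw [comp, if_pos hcst] at ha
    obtain ⟨p, _, rfl⟩ := Option.map_eq_some_iff.mp ha
    exact ⟨p.1, by rw [comp, if_pos hcst]; exact ha⟩
  choose g hg using hex
  have hdec : ∀ i, g (i+1) < g i :=
    fun i => part1 hcst i (i+1) (Nat.lt_succ_self i) (g i) (g (i+1)) (hg i) (hg (i+1))
  have hbd : ∀ n, g n + n ≤ g 0 := by
    intro n
    induction n with
    | zero => simp
    | succ n ih => have := hdec n; omega
  have := hbd (g 0 + 1)
  omega
end
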